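/- arXiv:2002.08750 — 7 statements merged into one kernel-verified Lean document; each statement's English description precedes it below -/
import Mathlib

section
/- Let a, ℓ, n be non-negative integers with ℓ ≥ 1, and for an integer x let x̂ denote the least non-negative residue of x modulo ℓ. Then n²·â·(ℓ − â) ≡ (n·a)̂·(ℓ − (n·a)̂) (mod 2ℓ). In particular, the quantity R_n(a,ℓ) := (n²·â·(ℓ − â) − (n·a)̂·(ℓ − (n·a)̂))/(2ℓ) is an integer. -/
lemma key_emod_quad (x ℓ : ℤ) :
    2 * ℓ ∣ x * (ℓ - x) - (x % ℓ) * (ℓ - x % ℓ) := by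
  obtain ⟨m, hm⟩ := Int.even_mul_succ_self (x / ℓ)
  refine ⟨m * ℓ - (x / ℓ) * x, ?_⟩
  have h : x % ℓ = x - ℓ * (x / ℓ) := by rw [Int.emod_def]
  rw [h]
  linear_combination (ℓ * ℓ) * hm

/-- For non-negative integers `a`, `ℓ`, `n` with `ℓ ≥ 1`, writing `x % ℓ` for the least
non-negative residue of `x` modulo `ℓ`, we have
`n² · â · (ℓ − â) ≡ (n·a)̂ · (ℓ − (n·a)̂) (mod 2ℓ)`; in particular the quantity
`R_n(a, ℓ) = (n² · â · (ℓ − â) − (n·a)̂ · (ℓ − (n·a)̂)) / (2ℓ)` is an integer. -/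
theorem greatest_common_valuation_stmt_0 (a ℓ n : ℤ) (ha : 0 ≤ a) (hn : 0 ≤ n) (hℓ : 1 ≤ ℓ) :
    n ^ 2 * (a % ℓ) * (ℓ - a % ℓ) ≡ (n * a) % ℓ * (ℓ - (n * a) % ℓ) [ZMOD (2 * ℓ)] ∧
    ∃ R : ℤ, n ^ 2 * (a % ℓ) * (ℓ - a % ℓ) - (n * a) % ℓ * (ℓ - (n * a) % ℓ) = 2 * ℓ * R := by
  set r := a % ℓ with hr
  have h3 : (n * r) % ℓ = (n * a) % ℓ := by
    rw [hr, Int.mul_emod, Int.emod_emod_of_dvd a dvd_rfl, ← Int.mul_emod]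
  have h1 : 2 * ℓ ∣ n ^ 2 * r * (ℓ - r) - (n * r) * (ℓ - n * r) := by
    obtain ⟨m, hm⟩ := Int.even_mul_succ_self (n - 1)
    exact ⟨m * r, by linear_combination r * ℓ * hm⟩
  have h2 : 2 * ℓ ∣ (n * r) * (ℓ - n * r) - (n * a) % ℓ * (ℓ - (n * a) % ℓ) := by
    have := key_emod_quad (n * r) ℓ
    rwa [h3] at this
  have hD : 2 * ℓ ∣ n ^ 2 * r * (ℓ - r) - (n * a) % ℓ * (ℓ - (n * a) % ℓ) := by
    have := dvd_add h1 h2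
    rwa [sub_add_sub_cancel] at this
  obtain ⟨R, hR⟩ := hD
  exact ⟨(Int.modEq_iff_dvd.mpr ⟨-R, by linarith⟩), R, hR⟩
end

section
/- Let P = (x, y) ∈ K² satisfy f(x, y) = y² + a₁xy + a₃y − x³ − a₂x² − a₄x − a₆ = 0, where a₁, a₂, a₃, a₄, a₆ ∈ R with v(a₃) > 0, v(a₄) > 0 and v(a₆) > 0. Then v(∂f/∂x(P)) = v(a₁y − 3x² − 2a₂x − a₄) > 0 and v(∂f/∂y(P)) = v(2y + a₁x + a₃) > 0 hold simultaneously if and only if v(x) > 0 and v(y) > 0. (That is, P has singular reduction modulo π if and only if v(x) > 0 and v(y) > 0.) -/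
/-- Let `K` be a field with a normalised discrete valuation `v` (a finite extension of `ℚ_p`)
with uniformiser `π`.  Let `P = (x, y) ∈ K²` satisfy
`f(x, y) = y² + a₁xy + a₃y − x³ − a₂x² − a₄x − a₆ = 0` with integral coefficients `aᵢ` and
`v(a₃) > 0`, `v(a₄) > 0`, `v(a₆) > 0`.  Then
`v(∂f/∂x(P)) = v(a₁y − 3x² − 2a₂x − a₄) > 0` and `v(∂f/∂y(P)) = v(2y + a₁x + a₃) > 0`
hold simultaneously (i.e. `P` has singular reduction) if and only if `v(x) > 0` and
`v(y) > 0`. -/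
theorem greatest_common_valuation_stmt_2 {K : Type*} [Field K]
    (v : K → WithTop ℤ)
    (hv_top : ∀ z : K, v z = ⊤ ↔ z = 0)
    (hv_mul : ∀ z w : K, v (z * w) = v z + v w)
    (hv_add : ∀ z w : K, min (v z) (v w) ≤ v (z + w))
    (π : K) (hπ : v π = 1)
    (a₁ a₂ a₃ a₄ a₆ : K)
    (ha₁ : 0 ≤ v a₁) (ha₂ : 0 ≤ v a₂) (ha₃ : 0 < v a₃)
    (ha₄ : 0 < v a₄) (ha₆ : 0 < v a₆)
    (x y : K)
    (hP : y ^ 2 + a₁ * x * y + a₃ * y - x ^ 3 - a₂ * x ^ 2 - a₄ * x - a₆ = 0) :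
    (0 < v (a₁ * y - 3 * x ^ 2 - 2 * a₂ * x - a₄) ∧ 0 < v (2 * y + a₁ * x + a₃)) ↔
      (0 < v x ∧ 0 < v y) := by
  -- ## Basic facts about the valuation
  have hv1 : v 1 = 0 := by
    have h1 : v 1 ≠ ⊤ := by simp [hv_top]
    have hm := hv_mul 1 1
    rw [one_mul] at hm
    obtain ⟨n, hn⟩ := WithTop.ne_top_iff_exists.mp h1
    rw [← hn] at hm ⊢
    have h2 : n = n + n := by exact_mod_cast hm
    have h3 : n = 0 := by omega
    exact_mod_cast h3
  have hvneg : ∀ z : K, v (-z) = v z := by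
    intro z
    have hm1 : v (-1 : K) = 0 := by
      have h1 : v (-1 : K) ≠ ⊤ := by simp [hv_top]
      have hm := hv_mul (-1 : K) (-1)
      rw [neg_mul_neg, one_mul, hv1] at hm
      obtain ⟨n, hn⟩ := WithTop.ne_top_iff_exists.mp h1
      rw [← hn] at hm ⊢
      have h2 : (0 : ℤ) = n + n := by exact_mod_cast hm
      have h3 : n = 0 := by omega
      exact_mod_cast h3
    have e : v (-z) = v ((-1) * z) := by rw [neg_one_mul]
    rw [e, hv_mul, hm1, zero_add]
  have hv_add_eq : ∀ z w : K, v z < v w → v (z + w) = v z := by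
    intro z w h
    refine le_antisymm ?_ ?_
    · have e : z + w + -w = z := by ring
      have h2 := hv_add (z + w) (-w)
      rw [e, hvneg] at h2
      rcases min_le_iff.mp h2 with h3 | h3
      · exact h3
      · exact absurd (lt_of_lt_of_le h h3) (by simp)
    · calc v z = min (v z) (v w) := (min_eq_left h.le).symm
        _ ≤ v (z + w) := hv_add z w
  have hle_add : ∀ (c : WithTop ℤ) (z w : K), c ≤ v z → c ≤ v w → c ≤ v (z + w) :=
    fun c z w h1 h2 => le_trans (le_min h1 h2) (hv_add z w)
  have hlt_add : ∀ (c : WithTop ℤ) (z w : K), c < v z → c < v w → c < v (z + w) :=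
    fun c z w h1 h2 => lt_of_lt_of_le (lt_min h1 h2) (hv_add z w)
  have hlt_sub : ∀ (c : WithTop ℤ) (z w : K), c < v z → c < v w → c < v (z - w) := by
    intro c z w h1 h2
    rw [sub_eq_add_neg]
    exact hlt_add c z (-w) h1 (by rwa [hvneg])
  have hle_sub : ∀ (c : WithTop ℤ) (z w : K), c ≤ v z → c ≤ v w → c ≤ v (z - w) := by
    intro c z w h1 h2
    rw [sub_eq_add_neg]
    exact hle_add c z (-w) h1 (by rwa [hvneg])
  have hv2 : 0 ≤ v 2 := by
    have h := hle_add 0 1 1 hv1.ge hv1.ge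
    norm_num at h
    exact h
  have hv3 : 0 ≤ v 3 := by
    have h := hle_add 0 1 2 hv1.ge hv2
    norm_num at h
    exact h
  have hx2 : v (x ^ 2) = v x + v x := by rw [sq, hv_mul]
  have hx3 : v (x ^ 3) = v x + v x + v x := by
    have e : x ^ 3 = x * x * x := by ring
    rw [e, hv_mul, hv_mul]
  constructor
  · -- ## Forward direction
    rintro ⟨hA, hB⟩
    -- the "constant-free" partials
    have hC : 0 < v (a₁ * y - 3 * x ^ 2 - 2 * a₂ * x) := by
      have e : a₁ * y - 3 * x ^ 2 - 2 * a₂ * x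
          = (a₁ * y - 3 * x ^ 2 - 2 * a₂ * x - a₄) + a₄ := by ring
      rw [e]; exact hlt_add 0 _ _ hA ha₄
    have hD : 0 < v (2 * y + a₁ * x) := by
      have e : 2 * y + a₁ * x = (2 * y + a₁ * x + a₃) - a₃ := by ring
      rw [e]; exact hlt_sub 0 _ _ hB ha₃
    -- Step 1: 0 < v x
    have hx : 0 < v x := by
      rcases lt_trichotomy (v x) 0 with hneg | hzero | hpos
      · -- case v x < 0 : contradiction
        exfalso
        have hxt : v x ≠ ⊤ := ne_top_of_lt (lt_of_lt_of_le hneg le_top)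
        obtain ⟨n, hn⟩ := WithTop.ne_top_iff_exists.mp hxt
        have hn0 : n < 0 := by rw [← hn] at hneg; exact_mod_cast hneg
        -- v (RHS) = 3n
        have hx3n : v (x ^ 3) = ((n + n + n : ℤ) : WithTop ℤ) := by
          rw [hx3, ← hn]; norm_cast
        have hx2n : v (x ^ 2) = ((n + n : ℤ) : WithTop ℤ) := by
          rw [hx2, ← hn]; norm_cast
        have hrest : ((n + n + n : ℤ) : WithTop ℤ) < v (a₂ * x ^ 2 + a₄ * x + a₆) := by
          refine hlt_add _ _ _ (hlt_add _ _ _ ?_ ?_) ?_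
          · rw [hv_mul, hx2n]
            calc ((n + n + n : ℤ) : WithTop ℤ) < ((n + n : ℤ) : WithTop ℤ) := by
                  exact_mod_cast by omega
              _ = 0 + ((n + n : ℤ) : WithTop ℤ) := (zero_add _).symm
              _ ≤ v a₂ + ((n + n : ℤ) : WithTop ℤ) := add_le_add_left ha₂ _
          · rw [hv_mul, ← hn]
            calc ((n + n + n : ℤ) : WithTop ℤ) < ((n : ℤ) : WithTop ℤ) := by
                  exact_mod_cast by omega
              _ = 0 + ((n : ℤ) : WithTop ℤ) := (zero_add _).symm
              _ ≤ v a₄ + ((n : ℤ) : WithTop ℤ) := add_le_add_left ha₄.le _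
          · calc ((n + n + n : ℤ) : WithTop ℤ) < 0 := by exact_mod_cast by omega
              _ < v a₆ := ha₆
        have hRHS : v (x ^ 3 + (a₂ * x ^ 2 + a₄ * x + a₆)) = ((n + n + n : ℤ) : WithTop ℤ) := by
          rw [hv_add_eq _ _ (by rw [hx3n]; exact hrest), hx3n]
        have e : y * (y + (a₁ * x + a₃)) = x ^ 3 + (a₂ * x ^ 2 + a₄ * x + a₆) := by
          linear_combination hP
        have key : ((n + n + n : ℤ) : WithTop ℤ) = v y + v (y + (a₁ * x + a₃)) := by
          rw [← hRHS, ← e, hv_mul]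
        -- bound on v (a₁ x + a₃)
        have hs : ((n : ℤ) : WithTop ℤ) ≤ v (a₁ * x + a₃) := by
          refine hle_add _ _ _ ?_ ?_
          · rw [hv_mul, ← hn]
            calc ((n : ℤ) : WithTop ℤ) = 0 + ((n : ℤ) : WithTop ℤ) := (zero_add _).symm
              _ ≤ v a₁ + ((n : ℤ) : WithTop ℤ) := add_le_add_left ha₁ _
          · calc ((n : ℤ) : WithTop ℤ) ≤ 0 := by exact_mod_cast by omega
              _ ≤ v a₃ := ha₃.le
        rcases le_or_gt ((n : ℤ) : WithTop ℤ) (v y) with hny | hny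
        · -- v y ≥ n : 3n ≥ 2n, contradiction
          have h2 : ((n : ℤ) : WithTop ℤ) ≤ v (y + (a₁ * x + a₃)) :=
            hle_add _ _ _ hny hs
          have h3 : ((n : ℤ) : WithTop ℤ) + ((n : ℤ) : WithTop ℤ)
              ≤ ((n + n + n : ℤ) : WithTop ℤ) := key ▸ add_le_add hny h2
          have h4 : n + n ≤ n + n + n := by exact_mod_cast h3
          omega
        · -- v y < n
          have hyt : v y ≠ ⊤ := ne_top_of_lt hny
          obtain ⟨m, hm⟩ := WithTop.ne_top_iff_exists.mp hyt
          have hmn : m < n := by rw [← hm] at hny; exact_mod_cast hny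
          have hys : v y < v (a₁ * x + a₃) :=
            lt_of_lt_of_le hny hs
          have key2 : ((n + n + n : ℤ) : WithTop ℤ) = v y + v y := by
            rw [key, hv_add_eq _ _ hys]
          have h2m3n : n + n + n = m + m := by
            rw [← hm] at key2; exact_mod_cast key2
          -- split on v 2
          rcases eq_or_lt_of_le hv2 with h2z | h2pos
          · -- v 2 = 0 : v B = m < 0
            have hvB : v (2 * y + a₁ * x + a₃) = ((m : ℤ) : WithTop ℤ) := by
              have e2 : 2 * y + a₁ * x + a₃ = 2 * y + (a₁ * x + a₃) := by ring
              have hv2y : v (2 * y) = ((m : ℤ) : WithTop ℤ) := by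
                rw [hv_mul, ← h2z, zero_add, hm]
              rw [e2, hv_add_eq _ _ (by rw [hv2y, hm]; exact hys), hv2y]
            rw [hvB] at hB
            have : (0 : ℤ) < m := by exact_mod_cast hB
            omega
          · -- 0 < v 2 : v 3 = 0 and the ∂/∂x dominant term 3x² wins
            have hv30 : v (3 : K) = 0 := by
              have e3 : (3 : K) = 1 + 2 := by norm_num
              rw [e3, hv_add_eq 1 2 (by rw [hv1]; exact h2pos), hv1]
            have hv3x2 : v (-(3 * x ^ 2)) = ((n + n : ℤ) : WithTop ℤ) := by
              rw [hvneg, hv_mul, hv30, zero_add, hx2n]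
            have hrest2 : ((n + n : ℤ) : WithTop ℤ)
                < v (a₁ * y - 2 * a₂ * x - a₄) := by
              refine hlt_sub _ _ _ (hlt_sub _ _ _ ?_ ?_) ?_
              · rw [hv_mul, ← hm]
                calc ((n + n : ℤ) : WithTop ℤ) < ((m : ℤ) : WithTop ℤ) := by
                      exact_mod_cast by omega
                  _ = 0 + ((m : ℤ) : WithTop ℤ) := (zero_add _).symm
                  _ ≤ v a₁ + ((m : ℤ) : WithTop ℤ) := add_le_add_left ha₁ _
              · have e4 : 2 * a₂ * x = 2 * (a₂ * x) := by ring
                rw [e4, hv_mul, hv_mul, ← hn]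
                calc ((n + n : ℤ) : WithTop ℤ) < ((n : ℤ) : WithTop ℤ) := by
                      exact_mod_cast by omega
                  _ = 0 + (0 + ((n : ℤ) : WithTop ℤ)) := by rw [zero_add, zero_add]
                  _ ≤ v 2 + (v a₂ + ((n : ℤ) : WithTop ℤ)) :=
                      add_le_add hv2 (add_le_add_left ha₂ _)
              · calc ((n + n : ℤ) : WithTop ℤ) < 0 := by exact_mod_cast by omega
                  _ < v a₄ := ha₄
            have eC : a₁ * y - 3 * x ^ 2 - 2 * a₂ * x - a₄
                = -(3 * x ^ 2) + (a₁ * y - 2 * a₂ * x - a₄) := by ring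
            have hvC : v (a₁ * y - 3 * x ^ 2 - 2 * a₂ * x - a₄)
                = ((n + n : ℤ) : WithTop ℤ) := by
              rw [eC, hv_add_eq _ _ (by rw [hv3x2]; exact hrest2), hv3x2]
            rw [hvC] at hA
            have : (0 : ℤ) < n + n := by exact_mod_cast hA
            omega
      · -- case v x = 0 : contradiction
        exfalso
        -- first, 0 ≤ v y
        have hy0 : 0 ≤ v y := by
          by_contra hcon
          push_neg at hcon
          have e : y * (y + (a₁ * x + a₃)) = x ^ 3 + (a₂ * x ^ 2 + a₄ * x + a₆) := by
            linear_combination hP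
          have hRHS : 0 ≤ v (x ^ 3 + (a₂ * x ^ 2 + a₄ * x + a₆)) := by
            refine hle_add _ _ _ ?_ (hle_add _ _ _ (hle_add _ _ _ ?_ ?_) ?_)
            · rw [hx3, hzero]; norm_num
            · rw [hv_mul, hx2, hzero]; simpa using ha₂
            · rw [hv_mul, hzero]; simpa using ha₄.le
            · exact ha₆.le
          have hys : v y < v (a₁ * x + a₃) := by
            refine lt_of_lt_of_le hcon (hle_add _ _ _ ?_ ha₃.le)
            rw [hv_mul, hzero]; simpa using ha₁
          have key : 0 ≤ v y + v y := by
            have k := hRHS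
            rw [← e, hv_mul y (y + (a₁ * x + a₃)), hv_add_eq _ _ hys] at k
            exact k
          have hyt : v y ≠ ⊤ := ne_top_of_lt (lt_of_lt_of_le hcon le_top)
          obtain ⟨m, hm⟩ := WithTop.ne_top_iff_exists.mp hyt
          rw [← hm] at key hcon
          have h1 : (0 : ℤ) ≤ m + m := by exact_mod_cast key
          have h2 : m < 0 := by exact_mod_cast hcon
          omega
        -- v E > 0 where E = y² + a₁xy − x³ − a₂x²
        have hE : 0 < v (y ^ 2 + a₁ * x * y - x ^ 3 - a₂ * x ^ 2) := by
          have e : y ^ 2 + a₁ * x * y - x ^ 3 - a₂ * x ^ 2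
              = a₄ * x + (a₆ - a₃ * y) := by linear_combination hP
          rw [e]
          refine hlt_add _ _ _ ?_ (hlt_sub _ _ _ ha₆ ?_)
          · rw [hv_mul, hzero, add_zero]; exact ha₄
          · rw [hv_mul]
            exact lt_of_lt_of_le ha₃ (le_add_of_nonneg_right hy0)
        -- the key identity: 2x³ = a₁x·D − 2x·C − D² + 4E  forces 0 < v 2
        have h2pos : 0 < v (2 : K) := by
          have e : 2 * x ^ 3
              = a₁ * x * (2 * y + a₁ * x)
                - 2 * x * (a₁ * y - 3 * x ^ 2 - 2 * a₂ * x)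
                - (2 * y + a₁ * x) ^ 2
                + 4 * (y ^ 2 + a₁ * x * y - x ^ 3 - a₂ * x ^ 2) := by ring
          have hI : 0 < v (2 * x ^ 3) := by
            rw [e]
            refine hlt_add _ _ _ (hlt_sub _ _ _ (hlt_sub _ _ _ ?_ ?_) ?_) ?_
            · -- v (a₁ x D) > 0
              rw [hv_mul, hv_mul, hzero, add_zero]
              exact lt_of_lt_of_le hD (le_add_of_nonneg_left ha₁)
            · -- v (2 x C) > 0
              rw [hv_mul, hv_mul, hzero, add_zero]
              exact lt_of_lt_of_le hC (le_add_of_nonneg_left hv2)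
            · -- v (D²) > 0
              rw [sq, hv_mul]
              exact lt_of_lt_of_le hD (le_add_of_nonneg_left hD.le)
            · -- v (4 E) > 0
              have e4 : (4 : K) = 2 * 2 := by norm_num
              rw [hv_mul, e4, hv_mul]
              exact lt_of_lt_of_le hE (le_add_of_nonneg_left (add_nonneg hv2 hv2))
          rwa [hv_mul, hx3, hzero, add_zero, add_zero, add_zero] at hI
        have hv30 : v (3 : K) = 0 := by
          have e3 : (3 : K) = 1 + 2 := by norm_num
          rw [e3, hv_add_eq 1 2 (by rw [hv1]; exact h2pos), hv1]
        -- v (a₁ y) = 0, hence v a₁ = 0 and v y = 0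
        have ha₁y : ¬ (0 < v (a₁ * y)) := by
          intro hcon
          have e : 3 * x ^ 2 = a₁ * y - 2 * a₂ * x - (a₁ * y - 3 * x ^ 2 - 2 * a₂ * x) := by
            ring
          have h1 : 0 < v (3 * x ^ 2) := by
            rw [e]
            refine hlt_sub _ _ _ (hlt_sub _ _ _ hcon ?_) hC
            have e4 : 2 * a₂ * x = 2 * (a₂ * x) := by ring
            rw [e4, hv_mul, hv_mul, hzero, add_zero]
            exact lt_of_lt_of_le h2pos (le_add_of_nonneg_right ha₂)
          rw [hv_mul, hv30, zero_add, hx2, hzero, add_zero] at h1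
          exact lt_irrefl _ h1
        have ha₁0 : v a₁ = 0 ∧ v y = 0 := by
          rw [hv_mul] at ha₁y
          constructor
          · rcases eq_or_lt_of_le ha₁ with h | h
            · exact h.symm
            · exact absurd (lt_of_lt_of_le h (le_add_of_nonneg_right hy0)) ha₁y
          · rcases eq_or_lt_of_le hy0 with h | h
            · exact h.symm
            · exact absurd (lt_of_lt_of_le h (le_add_of_nonneg_left ha₁)) ha₁y
        -- final contradiction : v (a₁ x) = 0 but a₁x = D − 2y has positive valuation
        have hfin : 0 < v (a₁ * x) := by
          have e : a₁ * x = (2 * y + a₁ * x) - 2 * y := by ring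
          rw [e]
          refine hlt_sub _ _ _ hD ?_
          rw [hv_mul, ha₁0.2, add_zero]
          exact h2pos
        rw [hv_mul, ha₁0.1, hzero, add_zero] at hfin
        exact lt_irrefl _ hfin
      · exact hpos
    -- Step 2: 0 < v y
    have hy : 0 < v y := by
      by_contra hcon
      push_neg at hcon
      have e : y * (y + (a₁ * x + a₃)) = x ^ 3 + (a₂ * x ^ 2 + a₄ * x + a₆) := by
        linear_combination hP
      have hRHS : 0 < v (x ^ 3 + (a₂ * x ^ 2 + a₄ * x + a₆)) := by
        refine hlt_add _ _ _ ?_ (hlt_add _ _ _ (hlt_add _ _ _ ?_ ?_) ?_)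
        · rw [hx3]
          have h1 : 0 < v x + v x := lt_of_lt_of_le hx (le_add_of_nonneg_left hx.le)
          exact lt_of_lt_of_le hx (le_add_of_nonneg_left h1.le)
        · rw [hv_mul, hx2]
          have h1 : 0 < v x + v x := lt_of_lt_of_le hx (le_add_of_nonneg_left hx.le)
          exact lt_of_lt_of_le h1 (le_add_of_nonneg_left ha₂)
        · rw [hv_mul]
          exact lt_of_lt_of_le hx (le_add_of_nonneg_left ha₄.le)
        · exact ha₆
      have hys : v y < v (a₁ * x + a₃) := by
        refine lt_of_le_of_lt hcon (hlt_add _ _ _ ?_ ha₃)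
        rw [hv_mul]
        exact lt_of_lt_of_le hx (le_add_of_nonneg_left ha₁)
      have key : 0 < v y + v y := by
        have k := hRHS
        rw [← e, hv_mul y (y + (a₁ * x + a₃)), hv_add_eq _ _ hys] at k
        exact k
      have hyt : v y ≠ ⊤ := by
        intro h
        rw [h] at hcon
        simp at hcon
      obtain ⟨m, hm⟩ := WithTop.ne_top_iff_exists.mp hyt
      rw [← hm] at key hcon
      have h1 : (0 : ℤ) < m + m := by exact_mod_cast key
      have h2 : m ≤ 0 := by exact_mod_cast hcon
      omega
    exact ⟨hx, hy⟩
  · -- ## Reverse direction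
    rintro ⟨hx, hy⟩
    constructor
    · refine hlt_sub _ _ _ (hlt_sub _ _ _ (hlt_sub _ _ _ ?_ ?_) ?_) ha₄
      · rw [hv_mul]
        exact lt_of_lt_of_le hy (le_add_of_nonneg_left ha₁)
      · have e : 3 * x ^ 2 = 3 * (x * x) := by ring
        rw [e, hv_mul, hv_mul]
        have h1 : 0 < v x + v x := lt_of_lt_of_le hx (le_add_of_nonneg_left hx.le)
        exact lt_of_lt_of_le h1 (le_add_of_nonneg_left hv3)
      · have e : 2 * a₂ * x = 2 * (a₂ * x) := by ring
        rw [e, hv_mul, hv_mul]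
        have h1 : 0 < v a₂ + v x := lt_of_lt_of_le hx (le_add_of_nonneg_left ha₂)
        exact lt_of_lt_of_le h1 (le_add_of_nonneg_left hv2)
    · refine hlt_add _ _ _ (hlt_add _ _ _ ?_ ?_) ha₃
      · rw [hv_mul]
        exact lt_of_lt_of_le hy (le_add_of_nonneg_left hv2)
      · rw [hv_mul]
        exact lt_of_lt_of_le hx (le_add_of_nonneg_left ha₁)
end

section
/- Let x = u²x' + r, y = u³y' + u²sx' + t (with u ≠ 0) be a change of variables transforming the Weierstrass curve E into the Weierstrass curve E', let P = (x, y) be a point on E and P' = (x', y') its image on E'. Then for every n ≥ 1, φₙ(P) = u^{2n² − 2}·(u²·φₙ'(P') + r·(ψₙ')²(P')), where φₙ, ψₙ are the polynomials attached to E and φₙ', ψₙ' those attached to E'. -/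
open Polynomial

private lemma preNormEDS'_scale {K : Type*} [CommRing K] (v B c d : K) :
    ∀ n : ℕ, preNormEDS' (v ^ 12 * B) (v ^ 8 * c) (v ^ 12 * d) n
      = v ^ (if Even n then n ^ 2 - 4 else n ^ 2 - 1) * preNormEDS' B c d n := by
  intro n
  induction n using Nat.strong_induction_on with
  | _ n ih =>
    match n with
    | 0 => simp
    | 1 => norm_num [Nat.even_iff]
    | 2 => norm_num [Nat.even_iff]
    | 3 => norm_num [Nat.even_iff]
    | 4 => norm_num [Nat.even_iff]
    | (m + 5) =>
      obtain ⟨k, rfl⟩ | ⟨k, rfl⟩ := Nat.even_or_odd m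
      · -- m = k + k, n = 2*(k+2)+1, odd
        have e1 := ih (k + 1) (by omega)
        have e2 := ih (k + 2) (by omega)
        have e3 := ih (k + 3) (by omega)
        have e4 := ih (k + 4) (by omega)
        rw [show k + k + 5 = 2 * (k + 2) + 1 by ring] at *
        rw [preNormEDS'_odd, preNormEDS'_odd, e1, e2, e3, e4]
        have hodd : ¬ Even (2 * (k + 2) + 1) := by simp [parity_simps]
        obtain ⟨j, rfl⟩ | ⟨j, rfl⟩ := Nat.even_or_odd k
        · have h1 : ¬ Even (j + j + 1) := by simp [parity_simps]
          have h2 : Even (j + j + 2) := by simp [parity_simps]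
          have h3 : ¬ Even (j + j + 3) := by simp [parity_simps]
          have h4 : Even (j + j + 4) := by simp [parity_simps]
          have hk : Even (j + j) := ⟨j, rfl⟩
          simp only [if_pos h2, if_pos h4, if_neg h1, if_neg h3, if_pos hk, if_neg hodd]
          rw [show (j+j+1)^2 - 1 = 4*j^2+4*j by rw [show (j+j+1)^2 = 4*j^2+4*j+1 by ring]; omega,
            show (j+j+2)^2 - 4 = 4*j^2+8*j by rw [show (j+j+2)^2 = 4*j^2+8*j+4 by ring]; omega,
            show (j+j+3)^2 - 1 = 4*j^2+12*j+8 by rw [show (j+j+3)^2 = 4*j^2+12*j+9 by ring]; omega,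
            show (j+j+4)^2 - 4 = 4*j^2+16*j+12 by rw [show (j+j+4)^2 = 4*j^2+16*j+16 by ring]; omega,
            show (2*(j+j+2)+1)^2 - 1 = 16*j^2+40*j+24 by
              rw [show (2*(j+j+2)+1)^2 = 16*j^2+40*j+25 by ring]; omega]
          ring
        · have h1 : Even (2*j+1 + 1) := by simp [parity_simps]
          have h2 : ¬ Even (2*j+1 + 2) := by simp [parity_simps]
          have h3 : Even (2*j+1 + 3) := by simp [parity_simps]
          have h4 : ¬ Even (2*j+1 + 4) := by simp [parity_simps]
          have hk : ¬ Even (2*j+1) := by simp [parity_simps]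
          simp only [if_pos h1, if_pos h3, if_neg h2, if_neg h4, if_neg hk, if_neg hodd]
          rw [show (2*j+1+1)^2 - 4 = 4*j^2+8*j by rw [show (2*j+1+1)^2 = 4*j^2+8*j+4 by ring]; omega,
            show (2*j+1+2)^2 - 1 = 4*j^2+12*j+8 by rw [show (2*j+1+2)^2 = 4*j^2+12*j+9 by ring]; omega,
            show (2*j+1+3)^2 - 4 = 4*j^2+16*j+12 by rw [show (2*j+1+3)^2 = 4*j^2+16*j+16 by ring]; omega,
            show (2*j+1+4)^2 - 1 = 4*j^2+20*j+24 by rw [show (2*j+1+4)^2 = 4*j^2+20*j+25 by ring]; omega,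
            show (2*(2*j+1+2)+1)^2 - 1 = 16*j^2+56*j+48 by
              rw [show (2*(2*j+1+2)+1)^2 = 16*j^2+56*j+49 by ring]; omega]
          ring
      · -- m = 2k+1, n = 2*(k+3), even
        have e1 := ih (k + 1) (by omega)
        have e2 := ih (k + 2) (by omega)
        have e3 := ih (k + 3) (by omega)
        have e4 := ih (k + 4) (by omega)
        have e5 := ih (k + 5) (by omega)
        rw [show 2 * k + 1 + 5 = 2 * (k + 3) by ring] at *
        rw [preNormEDS'_even, preNormEDS'_even, e1, e2, e3, e4, e5]
        have heven : Even (2 * (k + 3)) := ⟨k + 3, by ring⟩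
        obtain ⟨j, rfl⟩ | ⟨j, rfl⟩ := Nat.even_or_odd k
        · have h1 : ¬ Even (j + j + 1) := by simp [parity_simps]
          have h2 : Even (j + j + 2) := by simp [parity_simps]
          have h3 : ¬ Even (j + j + 3) := by simp [parity_simps]
          have h4 : Even (j + j + 4) := by simp [parity_simps]
          have h5 : ¬ Even (j + j + 5) := by simp [parity_simps]
          simp only [if_pos h2, if_pos h4, if_neg h1, if_neg h3, if_neg h5, if_pos heven]
          rw [show (j+j+1)^2 - 1 = 4*j^2+4*j by rw [show (j+j+1)^2 = 4*j^2+4*j+1 by ring]; omega,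
            show (j+j+2)^2 - 4 = 4*j^2+8*j by rw [show (j+j+2)^2 = 4*j^2+8*j+4 by ring]; omega,
            show (j+j+3)^2 - 1 = 4*j^2+12*j+8 by rw [show (j+j+3)^2 = 4*j^2+12*j+9 by ring]; omega,
            show (j+j+4)^2 - 4 = 4*j^2+16*j+12 by rw [show (j+j+4)^2 = 4*j^2+16*j+16 by ring]; omega,
            show (j+j+5)^2 - 1 = 4*j^2+20*j+24 by rw [show (j+j+5)^2 = 4*j^2+20*j+25 by ring]; omega,
            show (2*(j+j+3))^2 - 4 = 16*j^2+48*j+32 by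
              rw [show (2*(j+j+3))^2 = 16*j^2+48*j+36 by ring]; omega]
          ring
        · have h1 : Even (2*j+1 + 1) := by simp [parity_simps]
          have h2 : ¬ Even (2*j+1 + 2) := by simp [parity_simps]
          have h3 : Even (2*j+1 + 3) := by simp [parity_simps]
          have h4 : ¬ Even (2*j+1 + 4) := by simp [parity_simps]
          have h5 : Even (2*j+1 + 5) := by simp [parity_simps]
          simp only [if_pos h1, if_pos h3, if_pos h5, if_neg h2, if_neg h4, if_pos heven]
          rw [show (2*j+1+1)^2 - 4 = 4*j^2+8*j by rw [show (2*j+1+1)^2 = 4*j^2+8*j+4 by ring]; omega,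
            show (2*j+1+2)^2 - 1 = 4*j^2+12*j+8 by rw [show (2*j+1+2)^2 = 4*j^2+12*j+9 by ring]; omega,
            show (2*j+1+3)^2 - 4 = 4*j^2+16*j+12 by rw [show (2*j+1+3)^2 = 4*j^2+16*j+16 by ring]; omega,
            show (2*j+1+4)^2 - 1 = 4*j^2+20*j+24 by rw [show (2*j+1+4)^2 = 4*j^2+20*j+25 by ring]; omega,
            show (2*j+1+5)^2 - 4 = 4*j^2+24*j+32 by rw [show (2*j+1+5)^2 = 4*j^2+24*j+36 by ring]; omega,
            show (2*(2*j+1+3))^2 - 4 = 16*j^2+64*j+60 by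
              rw [show (2*(2*j+1+3))^2 = 16*j^2+64*j+64 by ring]; omega]
          ring

private lemma normEDS_scale {K : Type*} [CommRing K] (v b c d : K) (n : ℕ) :
    normEDS (v ^ 3 * b) (v ^ 8 * c) (v ^ 12 * d) (n : ℤ)
      = v ^ (n ^ 2 - 1) * normEDS b c d (n : ℤ) := by
  have h := preNormEDS'_scale v (b ^ 4) c d n
  rw [show v ^ 12 * b ^ 4 = (v ^ 3 * b) ^ 4 by ring] at h
  rcases n with _ | m
  · simp
  rw [normEDS_ofNat, normEDS_ofNat, h]
  by_cases he : Even (m + 1)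
  · have h2 : 2 ≤ m + 1 := by rcases he with ⟨j, hj⟩; omega
    have h4 : 4 ≤ (m + 1) ^ 2 := by
      calc 4 = 2 ^ 2 := by norm_num
      _ ≤ (m + 1) ^ 2 := Nat.pow_le_pow_left h2 2
    rw [if_pos he, if_pos he, if_pos he,
      show (m + 1) ^ 2 - 1 = ((m + 1) ^ 2 - 4) + 3 by omega, pow_add]
    ring
  · rw [if_neg he, if_neg he, if_neg he]
    ring

private lemma evalEval_psi {K : Type*} [CommRing K] (W : WeierstrassCurve K) (a b : K) (n : ℤ) :
    (W.ψ n).evalEval a b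
      = normEDS (W.ψ₂.evalEval a b) (W.Ψ₃.eval a) (W.preΨ₄.eval a) n := by
  rw [WeierstrassCurve.ψ, ← coe_evalEvalRingHom, map_normEDS]
  simp [evalEval_C]


/-- Let `K` be a field and `E/K` a Weierstrass curve.  Let `x = u²x' + r`,
`y = u³y' + u²sx' + t` (with `u ≠ 0`) be a change of variables transforming `E` into `E'`,
let `P = (x, y)` be a point on `E` and `P' = (x', y')` its image on `E'`.  Then for every
`n ≥ 1`, `φₙ(P) = u^(2n² − 2) · (u² · φₙ'(P') + r · (ψₙ')²(P'))`, where `φₙ`, `ψₙ` are the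
polynomials attached to `E` and `φₙ'`, `ψₙ'` those attached to `E'`. -/
theorem greatest_common_valuation_stmt_3 {K : Type*} [Field K]
    (W : WeierstrassCurve K) (u : Kˣ) (r s t : K)
    (W' : WeierstrassCurve K) (hW' : W' = (⟨u, r, s, t⟩ : WeierstrassCurve.VariableChange K) • W)
    (x y x' y' : K)
    (hx : x = (u : K) ^ 2 * x' + r)
    (hy : y = (u : K) ^ 3 * y' + (u : K) ^ 2 * s * x' + t)
    (hP : W.toAffine.Equation x y)
    (hP' : W'.toAffine.Equation x' y')
    (n : ℕ) (hn : 1 ≤ n) :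
    (W.φ n).evalEval x y =
      (u : K) ^ (2 * n ^ 2 - 2) *
        ((u : K) ^ 2 * (W'.φ n).evalEval x' y' + r * (W'.ψ n).evalEval x' y' ^ 2) := by
  have hu : (u : K) ≠ 0 := u.ne_zero
  subst hW' hx hy
  set C : WeierstrassCurve.VariableChange K := ⟨u, r, s, t⟩ with hC
  set W' : WeierstrassCurve K := C • W with hW'
  set x : K := (u : K) ^ 2 * x' + r with hx
  set y : K := (u : K) ^ 3 * y' + (u : K) ^ 2 * s * x' + t with hy
  -- base quantities
  have hB2 : W.b₂ = (u : K) ^ 2 * W'.b₂ - 12 * r := by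
    rw [hW', WeierstrassCurve.variableChange_b₂, Units.val_inv_eq_inv_val]
    field_simp
    simp only [hC]
    ring
  have hB4 : W.b₄ = (u : K) ^ 4 * W'.b₄ - r * W.b₂ - 6 * r ^ 2 := by
    rw [hW', WeierstrassCurve.variableChange_b₄, Units.val_inv_eq_inv_val]
    field_simp
    ring
  have hB6 : W.b₆ = (u : K) ^ 6 * W'.b₆ - 2 * r * W.b₄ - r ^ 2 * W.b₂ - 4 * r ^ 3 := by
    rw [hW', WeierstrassCurve.variableChange_b₆, Units.val_inv_eq_inv_val]
    field_simp
    ring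
  have hB8 : W.b₈ = (u : K) ^ 8 * W'.b₈ - 3 * r * W.b₆ - 3 * r ^ 2 * W.b₄
      - r ^ 3 * W.b₂ - 3 * r ^ 4 := by
    rw [hW', WeierstrassCurve.variableChange_b₈, Units.val_inv_eq_inv_val]
    field_simp
    ring
  have hb' := W'.b_relation
  -- the three base evaluation identities
  have h2 : W.ψ₂.evalEval x y = (u : K) ^ 3 * W'.ψ₂.evalEval x' y' := by
    simp only [WeierstrassCurve.ψ₂, WeierstrassCurve.Affine.evalEval_polynomialY, hW', hx, hy,
      WeierstrassCurve.variableChange_a₁, WeierstrassCurve.variableChange_a₃,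
      Units.val_inv_eq_inv_val]
    field_simp
    ring
  have h3 : W.Ψ₃.eval x = (u : K) ^ 8 * W'.Ψ₃.eval x' := by
    simp only [WeierstrassCurve.Ψ₃, eval_add, eval_mul, eval_pow, eval_C, eval_X, eval_ofNat]
    rw [hB8, hB6, hB4, hB2, hx]
    ring
  have h4 : W.preΨ₄.eval x = (u : K) ^ 12 * W'.preΨ₄.eval x' := by
    simp only [WeierstrassCurve.preΨ₄, eval_add, eval_sub, eval_mul, eval_pow, eval_C, eval_X,
      eval_ofNat]
    rw [hB8, hB6, hB4, hB2, hx]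
    linear_combination ((u : K) ^ 8 * r ^ 2 + 2 * (u : K) ^ 10 * r * x') * hb'
  -- the ψ transformation
  have hψ : ∀ m : ℕ, (W.ψ m).evalEval x y = (u : K) ^ (m ^ 2 - 1) * (W'.ψ m).evalEval x' y' := by
    intro m
    rw [evalEval_psi, evalEval_psi, h2, h3, h4, normEDS_scale]
  -- the φ transformation
  have hφeval : ∀ (V : WeierstrassCurve K) (a b : K) (k : ℤ), (V.φ k).evalEval a b
      = a * (V.ψ k).evalEval a b ^ 2 - (V.ψ (k + 1)).evalEval a b * (V.ψ (k - 1)).evalEval a b := by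
    intro V a b k
    simp only [WeierstrassCurve.φ, evalEval_sub, evalEval_mul, evalEval_pow, evalEval_C, eval_X]
  rcases n with _ | _ | m
  · omega
  · -- n = 1
    simp only [Nat.cast_one, hφeval]
    norm_num [hx]
  · -- n = m + 2
    have c1 : ((m + 2 : ℕ) : ℤ) + 1 = ((m + 3 : ℕ) : ℤ) := by push_cast; ring
    have c2 : ((m + 2 : ℕ) : ℤ) - 1 = ((m + 1 : ℕ) : ℤ) := by push_cast; ring
    rw [hφeval, hφeval, c1, c2, hψ, hψ, hψ, hx,
      show (m + 2) ^ 2 - 1 = m ^ 2 + 4 * m + 3 by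
        rw [show (m + 2) ^ 2 = m ^ 2 + 4 * m + 4 by ring]; omega,
      show (m + 3) ^ 2 - 1 = m ^ 2 + 6 * m + 8 by
        rw [show (m + 3) ^ 2 = m ^ 2 + 6 * m + 9 by ring]; omega,
      show (m + 1) ^ 2 - 1 = m ^ 2 + 2 * m by
        rw [show (m + 1) ^ 2 = m ^ 2 + 2 * m + 1 by ring]; omega,
      show 2 * (m + 2) ^ 2 - 2 = 2 * m ^ 2 + 8 * m + 6 by
        rw [show (m + 2) ^ 2 = m ^ 2 + 4 * m + 4 by ring]; omega]
    ring
end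

section
/- Suppose v(2) = 0 and let k ≥ 1 be an integer (corresponding to Kodaira type I_m^* with m = 2k − 1 odd). Assume v(a₁) ≥ 1, v(a₂) = 1, v(a₃) ≥ k + 1, v(a₄) ≥ k + 2, v(a₆) ≥ 2k + 2, and moreover v(b₆) = 2k + 2 and v(b₈) = 2k + 3. Let P = (x, y) be a point on E with v(x) > 0. Then: (a) if v(x) = 1, then v(φ₂(P)) = v(ψ₃(P)) = 4 and v(ψ₂²(P)) ≥ 4; (b) the range 1 < v(x) < k + 1 is impossible; (c) if v(x) ≥ k + 1, then v(φ₂(P)) = v(ψ₃(P)) = 2k + 3 (= m + 4) and v(ψ₂²(P)) = 2k + 2 (= m + 3). -/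
open Polynomial

section ValHelp
variable {K : Type*} [Field K] {v : K → WithTop ℤ}

private lemma myv_one (hv_top : ∀ z : K, v z = ⊤ ↔ z = 0)
    (hv_mul : ∀ z w : K, v (z * w) = v z + v w) : v (1 : K) = 0 := by
  have h := hv_mul 1 1
  rw [mul_one] at h
  have h1 : v (1 : K) ≠ ⊤ := by simp [hv_top]
  obtain ⟨n, hn⟩ := WithTop.ne_top_iff_exists.mp h1
  rw [← hn] at h ⊢
  have h2 : n = n + n := by exact_mod_cast h
  have h3 : n = 0 := by omega
  exact_mod_cast h3

private lemma myv_neg (hv_top : ∀ z : K, v z = ⊤ ↔ z = 0)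
    (hv_mul : ∀ z w : K, v (z * w) = v z + v w) (z : K) : v (-z) = v z := by
  have hm1 : v (-1 : K) = 0 := by
    have h := hv_mul (-1) (-1)
    rw [neg_mul_neg, one_mul, myv_one hv_top hv_mul] at h
    have h1 : v (-1 : K) ≠ ⊤ := by simp [hv_top]
    obtain ⟨n, hn⟩ := WithTop.ne_top_iff_exists.mp h1
    rw [← hn] at h ⊢
    have h2 : (0 : ℤ) = n + n := by exact_mod_cast h
    have h3 : n = 0 := by omega
    exact_mod_cast h3
  rw [show -z = -1 * z by ring, hv_mul, hm1, zero_add]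

private lemma myv_add_left (hv_top : ∀ z : K, v z = ⊤ ↔ z = 0)
    (hv_mul : ∀ z w : K, v (z * w) = v z + v w)
    (hv_add : ∀ z w : K, min (v z) (v w) ≤ v (z + w))
    {z w : K} (h : v z < v w) : v (z + w) = v z := by
  refine le_antisymm ?_ ?_
  · have h2 := hv_add (z + w) (-w)
    rw [add_neg_cancel_right, myv_neg hv_top hv_mul] at h2
    rcases le_or_gt (v (z + w)) (v w) with h3 | h3
    · rwa [min_eq_left h3] at h2
    · rw [min_eq_right h3.le] at h2
      exact absurd h2 (not_le.mpr h)
  · have := hv_add z w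
    rwa [min_eq_left h.le] at this

private lemma myv_add_right (hv_top : ∀ z : K, v z = ⊤ ↔ z = 0)
    (hv_mul : ∀ z w : K, v (z * w) = v z + v w)
    (hv_add : ∀ z w : K, min (v z) (v w) ≤ v (z + w))
    {z w : K} (h : v w < v z) : v (z + w) = v w := by
  rw [add_comm]; exact myv_add_left hv_top hv_mul hv_add h

private lemma myv_sub_left (hv_top : ∀ z : K, v z = ⊤ ↔ z = 0)
    (hv_mul : ∀ z w : K, v (z * w) = v z + v w)
    (hv_add : ∀ z w : K, min (v z) (v w) ≤ v (z + w))
    {z w : K} (h : v z < v w) : v (z - w) = v z := by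
  rw [sub_eq_add_neg]
  exact myv_add_left hv_top hv_mul hv_add (by rwa [myv_neg hv_top hv_mul])

private lemma myv_sub_right (hv_top : ∀ z : K, v z = ⊤ ↔ z = 0)
    (hv_mul : ∀ z w : K, v (z * w) = v z + v w)
    (hv_add : ∀ z w : K, min (v z) (v w) ≤ v (z + w))
    {z w : K} (h : v w < v z) : v (z - w) = v w := by
  rw [sub_eq_add_neg, myv_add_right hv_top hv_mul hv_add
    (by rwa [myv_neg hv_top hv_mul]), myv_neg hv_top hv_mul]

private lemma myv_add_ge
    (hv_add : ∀ z w : K, min (v z) (v w) ≤ v (z + w))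
    {z w : K} {c : WithTop ℤ} (h1 : c ≤ v z) (h2 : c ≤ v w) : c ≤ v (z + w) :=
  le_trans (le_min h1 h2) (hv_add z w)

private lemma myv_add_gt
    (hv_add : ∀ z w : K, min (v z) (v w) ≤ v (z + w))
    {z w : K} {c : WithTop ℤ} (h1 : c < v z) (h2 : c < v w) : c < v (z + w) :=
  lt_of_lt_of_le (lt_min h1 h2) (hv_add z w)

private lemma myv_sub_gt (hv_top : ∀ z : K, v z = ⊤ ↔ z = 0)
    (hv_mul : ∀ z w : K, v (z * w) = v z + v w)
    (hv_add : ∀ z w : K, min (v z) (v w) ≤ v (z + w))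
    {z w : K} {c : WithTop ℤ} (h1 : c < v z) (h2 : c < v w) : c < v (z - w) := by
  rw [sub_eq_add_neg]
  exact myv_add_gt hv_add h1 (by rwa [myv_neg hv_top hv_mul])

private lemma wt_le {a b : ℤ} (h : a ≤ b) :
    ((a : ℤ) : WithTop ℤ) ≤ ((b : ℤ) : WithTop ℤ) := WithTop.coe_le_coe.mpr h

private lemma wt_lt {a b : ℤ} (h : a < b) :
    ((a : ℤ) : WithTop ℤ) < ((b : ℤ) : WithTop ℤ) := WithTop.coe_lt_coe.mpr h

private lemma wt_eq {a b : ℤ} (h : a = b) :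
    ((a : ℤ) : WithTop ℤ) = ((b : ℤ) : WithTop ℤ) := by rw [h]

private lemma cadd (a b : ℤ) :
    ((a : ℤ) : WithTop ℤ) + ((b : ℤ) : WithTop ℤ) = ((a + b : ℤ) : WithTop ℤ) :=
  (WithTop.coe_add a b).symm

end ValHelp

/-- (Kodaira type `I_m^*`, `m = 2k − 1` odd, residue characteristic `≠ 2`.)
Let `K` be a field with a normalised discrete valuation `v` with uniformiser `π`, suppose
`v(2) = 0`, and let `k ≥ 1`.  Let `E/K` be a Weierstrass curve with `v(a₁) ≥ 1`, `v(a₂) = 1`,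
`v(a₃) ≥ k + 1`, `v(a₄) ≥ k + 2`, `v(a₆) ≥ 2k + 2`, `v(b₆) = 2k + 2` and `v(b₈) = 2k + 3`.
Let `P = (x, y)` be a point on `E` with `v(x) > 0`.  Then:
(a) if `v(x) = 1`, then `v(φ₂(P)) = v(ψ₃(P)) = 4` and `v(ψ₂²(P)) ≥ 4`;
(b) the range `1 < v(x) < k + 1` is impossible;
(c) if `v(x) ≥ k + 1`, then `v(φ₂(P)) = v(ψ₃(P)) = 2k + 3` and `v(ψ₂²(P)) = 2k + 2`. -/
theorem greatest_common_valuation_stmt_6 {K : Type*} [Field K]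
    (v : K → WithTop ℤ)
    (hv_top : ∀ z : K, v z = ⊤ ↔ z = 0)
    (hv_mul : ∀ z w : K, v (z * w) = v z + v w)
    (hv_add : ∀ z w : K, min (v z) (v w) ≤ v (z + w))
    (π : K) (hπ : v π = 1)
    (hv2 : v (2 : K) = 0)
    (k : ℤ) (hk : 1 ≤ k)
    (W : WeierstrassCurve K)
    (ha₁ : 1 ≤ v W.a₁) (ha₂ : v W.a₂ = 1)
    (ha₃ : ((k + 1 : ℤ) : WithTop ℤ) ≤ v W.a₃)
    (ha₄ : ((k + 2 : ℤ) : WithTop ℤ) ≤ v W.a₄)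
    (ha₆ : ((2 * k + 2 : ℤ) : WithTop ℤ) ≤ v W.a₆)
    (hb₆ : v W.b₆ = ((2 * k + 2 : ℤ) : WithTop ℤ))
    (hb₈ : v W.b₈ = ((2 * k + 3 : ℤ) : WithTop ℤ))
    (x y : K) (hP : W.toAffine.Equation x y) (hx : 0 < v x) :
    (v x = 1 →
      v ((W.Φ 2).eval x) = ((4 : ℤ) : WithTop ℤ) ∧
      v (W.Ψ₃.eval x) = ((4 : ℤ) : WithTop ℤ) ∧
      ((4 : ℤ) : WithTop ℤ) ≤ v (W.Ψ₂Sq.eval x)) ∧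
    (¬ (1 < v x ∧ v x < ((k + 1 : ℤ) : WithTop ℤ))) ∧
    (((k + 1 : ℤ) : WithTop ℤ) ≤ v x →
      v ((W.Φ 2).eval x) = ((2 * k + 3 : ℤ) : WithTop ℤ) ∧
      v (W.Ψ₃.eval x) = ((2 * k + 3 : ℤ) : WithTop ℤ) ∧
      v (W.Ψ₂Sq.eval x) = ((2 * k + 2 : ℤ) : WithTop ℤ)) := by
  -- basic facts
  have V1 : v (1 : K) = 0 := myv_one hv_top hv_mul
  have V4 : v (4 : K) = 0 := by
    rw [show (4 : K) = 2 * 2 by norm_num, hv_mul, hv2, add_zero]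
  have V3 : (0 : WithTop ℤ) ≤ v (3 : K) := by
    have h := hv_add 2 1
    rw [show (2 : K) + 1 = 3 by norm_num, hv2, V1, min_self] at h
    exact h
  have ha₁' : ((1 : ℤ) : WithTop ℤ) ≤ v W.a₁ := by exact_mod_cast ha₁
  have ha₂' : v W.a₂ = ((1 : ℤ) : WithTop ℤ) := by exact_mod_cast ha₂
  -- v b₂ = 1
  have hb₂ : v W.b₂ = ((1 : ℤ) : WithTop ℤ) := by
    have h1 : v (4 * W.a₂) = ((1 : ℤ) : WithTop ℤ) := by
      rw [hv_mul, V4, zero_add, ha₂']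
    have h2 : v (4 * W.a₂) < v (W.a₁ ^ 2) := by
      rw [h1, pow_two, hv_mul]
      calc ((1 : ℤ) : WithTop ℤ) < ((1 : ℤ) : WithTop ℤ) + ((1 : ℤ) : WithTop ℤ) := by
            rw [cadd]; exact wt_lt (by omega)
        _ ≤ v W.a₁ + v W.a₁ := add_le_add ha₁' ha₁'
    rw [show W.b₂ = 4 * W.a₂ + W.a₁ ^ 2 by rw [WeierstrassCurve.b₂]; ring,
      myv_add_left hv_top hv_mul hv_add h2, h1]
  -- v b₄ ≥ k + 2
  have hb₄ : ((k + 2 : ℤ) : WithTop ℤ) ≤ v W.b₄ := by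
    rw [show W.b₄ = 2 * W.a₄ + W.a₁ * W.a₃ by rw [WeierstrassCurve.b₄]]
    refine myv_add_ge hv_add ?_ ?_
    · rw [hv_mul, hv2, zero_add]; exact ha₄
    · rw [hv_mul]
      calc ((k + 2 : ℤ) : WithTop ℤ)
          = ((1 : ℤ) : WithTop ℤ) + ((k + 1 : ℤ) : WithTop ℤ) := by
            rw [cadd]; exact wt_eq (by ring)
        _ ≤ v W.a₁ + v W.a₃ := add_le_add ha₁' ha₃
  -- powers of x
  have hvx2 : v (x ^ 2) = v x + v x := by rw [pow_two, hv_mul]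
  have hvx3 : v (x ^ 3) = v x + v x + v x := by
    rw [pow_succ, hv_mul, hvx2]
  have hvx4 : v (x ^ 4) = v x + v x + v x + v x := by
    rw [pow_succ, hv_mul, hvx3]
  -- evaluations
  have hΨ2 : W.Ψ₂Sq.eval x = 4 * x ^ 3 + W.b₂ * x ^ 2 + 2 * W.b₄ * x + W.b₆ := by
    simp [WeierstrassCurve.Ψ₂Sq]
  have hΨ3 : W.Ψ₃.eval x = 3 * x ^ 4 + W.b₂ * x ^ 3 + 3 * W.b₄ * x ^ 2 + 3 * W.b₆ * x + W.b₈ := by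
    simp [WeierstrassCurve.Ψ₃]
  have hΦ : (W.Φ 2).eval x = x ^ 4 - W.b₄ * x ^ 2 - 2 * W.b₆ * x - W.b₈ := by
    rw [WeierstrassCurve.Φ_two]; simp
  -- the square identity from the equation of the curve
  have hsq : (2 * y + W.a₁ * x + W.a₃) ^ 2 = W.Ψ₂Sq.eval x := by
    have heq := (W.toAffine.equation_iff x y).mp hP
    rw [hΨ2]
    simp only [WeierstrassCurve.b₂, WeierstrassCurve.b₄, WeierstrassCurve.b₆]
    linear_combination 4 * heq
  have hparity : ∀ n : ℤ, v (W.Ψ₂Sq.eval x) = (n : WithTop ℤ) → ∃ m : ℤ, n = m + m := by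
    intro n hn
    have hsum : v (W.Ψ₂Sq.eval x) = v (2 * y + W.a₁ * x + W.a₃) + v (2 * y + W.a₁ * x + W.a₃) := by
      rw [← hsq, pow_two, hv_mul]
    rw [hn] at hsum
    have hs_ne : v (2 * y + W.a₁ * x + W.a₃) ≠ ⊤ := by
      intro hc
      rw [hc, add_top] at hsum
      exact WithTop.coe_ne_top hsum
    obtain ⟨m, hm⟩ := WithTop.ne_top_iff_exists.mp hs_ne
    refine ⟨m, ?_⟩
    rw [← hm, cadd] at hsum
    exact_mod_cast hsum
  refine ⟨?_, ?_, ?_⟩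
  · -- part (a): v x = 1
    intro h1
    have h1' : v x = ((1 : ℤ) : WithTop ℤ) := by exact_mod_cast h1
    -- Φ₂
    have e1 : v (x ^ 4) = ((4 : ℤ) : WithTop ℤ) := by
      rw [hvx4, h1', cadd, cadd, cadd]; exact wt_eq (by omega)
    have e2 : ((4 : ℤ) : WithTop ℤ) < v (W.b₄ * x ^ 2) := by
      rw [hv_mul, hvx2, h1', cadd]
      refine lt_of_lt_of_le (wt_lt (by omega : (4 : ℤ) < k + 2 + (1 + 1))) ?_
      rw [← cadd]
      exact add_le_add_left hb₄ _
    have e3 : ((4 : ℤ) : WithTop ℤ) < v (2 * W.b₆ * x) := by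
      rw [hv_mul, hv_mul, hv2, zero_add, hb₆, h1', cadd]
      exact wt_lt (by omega)
    have e4 : ((4 : ℤ) : WithTop ℤ) < v W.b₈ := by
      rw [hb₈]; exact wt_lt (by omega)
    have step1 : v (x ^ 4 - W.b₄ * x ^ 2) = ((4 : ℤ) : WithTop ℤ) := by
      rw [myv_sub_left hv_top hv_mul hv_add (by rw [e1]; exact e2), e1]
    have step2 : v (x ^ 4 - W.b₄ * x ^ 2 - 2 * W.b₆ * x) = ((4 : ℤ) : WithTop ℤ) := by
      rw [myv_sub_left hv_top hv_mul hv_add (by rw [step1]; exact e3), step1]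
    have hΦv : v ((W.Φ 2).eval x) = ((4 : ℤ) : WithTop ℤ) := by
      rw [hΦ, myv_sub_left hv_top hv_mul hv_add (by rw [step2]; exact e4), step2]
    -- Ψ₂Sq ≥ 4
    have f1 : v (4 * x ^ 3) = ((3 : ℤ) : WithTop ℤ) := by
      rw [hv_mul, V4, zero_add, hvx3, h1', cadd, cadd]; exact wt_eq (by omega)
    have f2 : v (W.b₂ * x ^ 2) = ((3 : ℤ) : WithTop ℤ) := by
      rw [hv_mul, hb₂, hvx2, h1', cadd, cadd]; exact wt_eq (by omega)
    have f3 : ((3 : ℤ) : WithTop ℤ) ≤ v (2 * W.b₄ * x) := by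
      rw [hv_mul, hv_mul, hv2, zero_add, h1']
      refine le_trans (wt_le (by omega : (3 : ℤ) ≤ k + 2 + 1)) ?_
      rw [← cadd]
      exact add_le_add_left hb₄ _
    have f4 : ((3 : ℤ) : WithTop ℤ) ≤ v W.b₆ := by
      rw [hb₆]; exact wt_le (by omega)
    have ge3 : ((3 : ℤ) : WithTop ℤ) ≤ v (W.Ψ₂Sq.eval x) := by
      rw [hΨ2]
      exact myv_add_ge hv_add (myv_add_ge hv_add (myv_add_ge hv_add f1.ge f2.ge) f3) f4
    have ge4 : ((4 : ℤ) : WithTop ℤ) ≤ v (W.Ψ₂Sq.eval x) := by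
      rcases eq_or_ne (v (W.Ψ₂Sq.eval x)) ⊤ with htop | htop
      · rw [htop]; exact le_top
      · obtain ⟨n, hn⟩ := WithTop.ne_top_iff_exists.mp htop
        obtain ⟨m, hm⟩ := hparity n hn.symm
        have h3 : (3 : ℤ) ≤ n := by
          rw [← hn] at ge3; exact_mod_cast ge3
        rw [← hn]
        exact wt_le (by omega)
    -- Ψ₃
    have hid : W.Ψ₃.eval x = x * W.Ψ₂Sq.eval x - (W.Φ 2).eval x := by
      rw [hΨ2, hΦ, hΨ3]; ring
    have g1 : ((4 : ℤ) : WithTop ℤ) < v (x * W.Ψ₂Sq.eval x) := by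
      rw [hv_mul, h1']
      calc ((4 : ℤ) : WithTop ℤ) < ((1 : ℤ) : WithTop ℤ) + ((4 : ℤ) : WithTop ℤ) := by
            rw [cadd]; exact wt_lt (by omega)
        _ ≤ ((1 : ℤ) : WithTop ℤ) + v (W.Ψ₂Sq.eval x) := add_le_add_right ge4 _
    have hΨ3v : v (W.Ψ₃.eval x) = ((4 : ℤ) : WithTop ℤ) := by
      rw [hid, myv_sub_right hv_top hv_mul hv_add (by rw [hΦv]; exact g1), hΦv]
    exact ⟨hΦv, hΨ3v, ge4⟩
  · -- part (b): impossible range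
    rintro ⟨hgt, hlt⟩
    have hne : v x ≠ ⊤ := fun hc => by rw [hc] at hlt; exact (not_top_lt hlt)
    obtain ⟨n, hn⟩ := WithTop.ne_top_iff_exists.mp hne
    have hn2 : (1 : ℤ) < n := by
      rw [← hn] at hgt; exact_mod_cast hgt
    have hnk : n < k + 1 := by
      rw [← hn] at hlt; exact_mod_cast hlt
    have g1 : v (W.b₂ * x ^ 2) = ((1 + 2 * n : ℤ) : WithTop ℤ) := by
      rw [hv_mul, hb₂, hvx2, ← hn, cadd, cadd]; exact wt_eq (by omega)
    have g2 : v (W.b₂ * x ^ 2) < v (4 * x ^ 3) := by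
      rw [g1, hv_mul, V4, zero_add, hvx3, ← hn, cadd, cadd]
      exact wt_lt (by omega)
    have g3 : ((1 + 2 * n : ℤ) : WithTop ℤ) < v (2 * W.b₄ * x) := by
      rw [hv_mul, hv_mul, hv2, zero_add, ← hn]
      refine lt_of_lt_of_le (wt_lt (by omega : (1 + 2 * n : ℤ) < k + 2 + n)) ?_
      rw [← cadd]
      exact add_le_add_left hb₄ _
    have g4 : ((1 + 2 * n : ℤ) : WithTop ℤ) < v W.b₆ := by
      rw [hb₆]; exact wt_lt (by omega)
    have hE2 : v (W.Ψ₂Sq.eval x) = ((1 + 2 * n : ℤ) : WithTop ℤ) := by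
      rw [hΨ2]
      have s1 : v (4 * x ^ 3 + W.b₂ * x ^ 2) = ((1 + 2 * n : ℤ) : WithTop ℤ) := by
        rw [myv_add_right hv_top hv_mul hv_add g2, g1]
      have s2 : v (4 * x ^ 3 + W.b₂ * x ^ 2 + 2 * W.b₄ * x) = ((1 + 2 * n : ℤ) : WithTop ℤ) := by
        rw [myv_add_left hv_top hv_mul hv_add (by rw [s1]; exact g3), s1]
      rw [myv_add_left hv_top hv_mul hv_add (by rw [s2]; exact g4), s2]
    obtain ⟨m, hm⟩ := hparity (1 + 2 * n) hE2
    omega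
  · -- part (c): v x ≥ k + 1
    intro ht
    -- Ψ₂Sq
    have c1 : ((2 * k + 2 : ℤ) : WithTop ℤ) < v (4 * x ^ 3) := by
      rw [hv_mul, V4, zero_add, hvx3]
      calc ((2 * k + 2 : ℤ) : WithTop ℤ) < ((3 * k + 3 : ℤ) : WithTop ℤ) := wt_lt (by omega)
        _ = ((k + 1 : ℤ) : WithTop ℤ) + ((k + 1 : ℤ) : WithTop ℤ) + ((k + 1 : ℤ) : WithTop ℤ) := by
            rw [cadd, cadd]; exact wt_eq (by ring)
        _ ≤ v x + v x + v x := add_le_add (add_le_add ht ht) ht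
    have c2 : ((2 * k + 2 : ℤ) : WithTop ℤ) < v (W.b₂ * x ^ 2) := by
      rw [hv_mul, hb₂, hvx2]
      calc ((2 * k + 2 : ℤ) : WithTop ℤ) < ((2 * k + 3 : ℤ) : WithTop ℤ) := wt_lt (by omega)
        _ = ((1 : ℤ) : WithTop ℤ) + (((k + 1 : ℤ) : WithTop ℤ) + ((k + 1 : ℤ) : WithTop ℤ)) := by
            rw [cadd, cadd]; exact wt_eq (by ring)
        _ ≤ ((1 : ℤ) : WithTop ℤ) + (v x + v x) := add_le_add_right (add_le_add ht ht) _
    have c3 : ((2 * k + 2 : ℤ) : WithTop ℤ) < v (2 * W.b₄ * x) := by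
      rw [hv_mul, hv_mul, hv2, zero_add]
      calc ((2 * k + 2 : ℤ) : WithTop ℤ) < ((2 * k + 3 : ℤ) : WithTop ℤ) := wt_lt (by omega)
        _ = ((k + 2 : ℤ) : WithTop ℤ) + ((k + 1 : ℤ) : WithTop ℤ) := by
            rw [cadd]; exact wt_eq (by ring)
        _ ≤ v W.b₄ + v x := add_le_add hb₄ ht
    have hE2c : v (W.Ψ₂Sq.eval x) = ((2 * k + 2 : ℤ) : WithTop ℤ) := by
      rw [hΨ2]
      have s1 : ((2 * k + 2 : ℤ) : WithTop ℤ) <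
          v (4 * x ^ 3 + W.b₂ * x ^ 2 + 2 * W.b₄ * x) :=
        myv_add_gt hv_add (myv_add_gt hv_add c1 c2) c3
      rw [myv_add_right hv_top hv_mul hv_add (by rw [hb₆]; exact s1), hb₆]
    -- Ψ₃
    have d1 : ((2 * k + 3 : ℤ) : WithTop ℤ) < v (3 * x ^ 4) := by
      rw [hv_mul, hvx4]
      calc ((2 * k + 3 : ℤ) : WithTop ℤ) < ((4 * k + 4 : ℤ) : WithTop ℤ) := wt_lt (by omega)
        _ = ((k + 1 : ℤ) : WithTop ℤ) + ((k + 1 : ℤ) : WithTop ℤ) + ((k + 1 : ℤ) : WithTop ℤ)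
            + ((k + 1 : ℤ) : WithTop ℤ) := by
            rw [cadd, cadd, cadd]; exact wt_eq (by ring)
        _ ≤ v x + v x + v x + v x := add_le_add (add_le_add (add_le_add ht ht) ht) ht
        _ ≤ v (3 : K) + (v x + v x + v x + v x) := le_add_of_nonneg_left V3
    have d2 : ((2 * k + 3 : ℤ) : WithTop ℤ) < v (W.b₂ * x ^ 3) := by
      rw [hv_mul, hb₂, hvx3]
      calc ((2 * k + 3 : ℤ) : WithTop ℤ) < ((3 * k + 4 : ℤ) : WithTop ℤ) := wt_lt (by omega)
        _ = ((1 : ℤ) : WithTop ℤ) + (((k + 1 : ℤ) : WithTop ℤ) + ((k + 1 : ℤ) : WithTop ℤ)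
            + ((k + 1 : ℤ) : WithTop ℤ)) := by
            rw [cadd, cadd, cadd]; exact wt_eq (by ring)
        _ ≤ ((1 : ℤ) : WithTop ℤ) + (v x + v x + v x) :=
            add_le_add_right (add_le_add (add_le_add ht ht) ht) _
    have d3 : ((2 * k + 3 : ℤ) : WithTop ℤ) < v (3 * W.b₄ * x ^ 2) := by
      rw [hv_mul, hv_mul, hvx2]
      calc ((2 * k + 3 : ℤ) : WithTop ℤ) < ((3 * k + 4 : ℤ) : WithTop ℤ) := wt_lt (by omega)
        _ = ((k + 2 : ℤ) : WithTop ℤ) + (((k + 1 : ℤ) : WithTop ℤ) + ((k + 1 : ℤ) : WithTop ℤ)) := by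
            rw [cadd, cadd]; exact wt_eq (by ring)
        _ ≤ v W.b₄ + (v x + v x) := add_le_add hb₄ (add_le_add ht ht)
        _ ≤ v (3 : K) + v W.b₄ + (v x + v x) :=
            add_le_add_left (le_add_of_nonneg_left V3) _
    have d4 : ((2 * k + 3 : ℤ) : WithTop ℤ) < v (3 * W.b₆ * x) := by
      rw [hv_mul, hv_mul, hb₆]
      calc ((2 * k + 3 : ℤ) : WithTop ℤ) < ((3 * k + 3 : ℤ) : WithTop ℤ) := wt_lt (by omega)
        _ = ((2 * k + 2 : ℤ) : WithTop ℤ) + ((k + 1 : ℤ) : WithTop ℤ) := by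
            rw [cadd]; exact wt_eq (by ring)
        _ ≤ ((2 * k + 2 : ℤ) : WithTop ℤ) + v x := add_le_add_right ht _
        _ ≤ v (3 : K) + ((2 * k + 2 : ℤ) : WithTop ℤ) + v x :=
            add_le_add_left (le_add_of_nonneg_left V3) _
    have hΨ3c : v (W.Ψ₃.eval x) = ((2 * k + 3 : ℤ) : WithTop ℤ) := by
      rw [hΨ3]
      have s1 : ((2 * k + 3 : ℤ) : WithTop ℤ) <
          v (3 * x ^ 4 + W.b₂ * x ^ 3 + 3 * W.b₄ * x ^ 2 + 3 * W.b₆ * x) :=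
        myv_add_gt hv_add (myv_add_gt hv_add (myv_add_gt hv_add d1 d2) d3) d4
      rw [myv_add_right hv_top hv_mul hv_add (by rw [hb₈]; exact s1), hb₈]
    -- Φ₂
    have e1 : ((2 * k + 3 : ℤ) : WithTop ℤ) < v (x ^ 4) := by
      rw [hvx4]
      calc ((2 * k + 3 : ℤ) : WithTop ℤ) < ((4 * k + 4 : ℤ) : WithTop ℤ) := wt_lt (by omega)
        _ = ((k + 1 : ℤ) : WithTop ℤ) + ((k + 1 : ℤ) : WithTop ℤ) + ((k + 1 : ℤ) : WithTop ℤ)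
            + ((k + 1 : ℤ) : WithTop ℤ) := by
            rw [cadd, cadd, cadd]; exact wt_eq (by ring)
        _ ≤ v x + v x + v x + v x := add_le_add (add_le_add (add_le_add ht ht) ht) ht
    have e2 : ((2 * k + 3 : ℤ) : WithTop ℤ) < v (W.b₄ * x ^ 2) := by
      rw [hv_mul, hvx2]
      calc ((2 * k + 3 : ℤ) : WithTop ℤ) < ((3 * k + 4 : ℤ) : WithTop ℤ) := wt_lt (by omega)
        _ = ((k + 2 : ℤ) : WithTop ℤ) + (((k + 1 : ℤ) : WithTop ℤ) + ((k + 1 : ℤ) : WithTop ℤ)) := by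
            rw [cadd, cadd]; exact wt_eq (by ring)
        _ ≤ v W.b₄ + (v x + v x) := add_le_add hb₄ (add_le_add ht ht)
    have e3 : ((2 * k + 3 : ℤ) : WithTop ℤ) < v (2 * W.b₆ * x) := by
      rw [hv_mul, hv_mul, hv2, zero_add, hb₆]
      calc ((2 * k + 3 : ℤ) : WithTop ℤ) < ((3 * k + 3 : ℤ) : WithTop ℤ) := wt_lt (by omega)
        _ = ((2 * k + 2 : ℤ) : WithTop ℤ) + ((k + 1 : ℤ) : WithTop ℤ) := by
            rw [cadd]; exact wt_eq (by ring)
        _ ≤ ((2 * k + 2 : ℤ) : WithTop ℤ) + v x := add_le_add_right ht _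
    have hΦc : v ((W.Φ 2).eval x) = ((2 * k + 3 : ℤ) : WithTop ℤ) := by
      rw [hΦ]
      have s1 : ((2 * k + 3 : ℤ) : WithTop ℤ) < v (x ^ 4 - W.b₄ * x ^ 2 - 2 * W.b₆ * x) :=
        myv_sub_gt hv_top hv_mul hv_add (myv_sub_gt hv_top hv_mul hv_add e1 e2) e3
      rw [myv_sub_right hv_top hv_mul hv_add (by rw [hb₈]; exact s1), hb₈]
    exact ⟨hΦc, hΨ3c, hE2c⟩
end

section
/- Suppose v(2) > 0 and let k ≥ 1 be an integer (corresponding to Kodaira type I_m^* with m = 2k − 1 odd and residue characteristic 2). Assume v(a₁) ≥ 1, v(a₂) = 1, v(a₃) = k + 1, v(a₄) ≥ k + 2 and v(a₆) ≥ 2k + 2. Let P = (x, y) be a point on E with v(x) > 0 satisfying the Weierstrass equation. Then: (a) if v(x) = 1, then v(φ₂(P)) = v(ψ₃(P)) = 4 and v(ψ₂²(P)) ≥ 4; (b) the range 1 < v(x) < k + 1 is impossible for a point with v(y) > 0; (c) if v(x) ≥ k + 1, then v(φ₂(P)) = v(ψ₃(P)) = 2k + 3 (= m + 4) and v(ψ₂²(P))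 = 2k + 2 (= m + 3). -/
open Polynomial

namespace GCV7Aux

variable {K : Type*} [Field K] {v : K → WithTop ℤ}

lemma v_one (hv_top : ∀ z : K, v z = ⊤ ↔ z = 0)
    (hv_mul : ∀ z w : K, v (z * w) = v z + v w) : v (1 : K) = 0 := by
  have h := hv_mul 1 1
  rw [mul_one] at h
  rcases eq_or_ne (v (1 : K)) ⊤ with hc | hc
  · exact absurd ((hv_top 1).mp hc) one_ne_zero
  obtain ⟨n, hn⟩ := WithTop.ne_top_iff_exists.mp hc
  rw [← hn] at h ⊢
  have hn' : n = n + n := by exact_mod_cast h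
  have : n = 0 := by omega
  simp [this]

lemma v_neg (hv_top : ∀ z : K, v z = ⊤ ↔ z = 0)
    (hv_mul : ∀ z w : K, v (z * w) = v z + v w) (z : K) : v (-z) = v z := by
  have h1 : v ((-1 : K)) = 0 := by
    have h := hv_mul (-1) (-1)
    rw [neg_mul_neg, one_mul, v_one hv_top hv_mul] at h
    rcases eq_or_ne (v (-1 : K)) ⊤ with hc | hc
    · exact absurd (neg_eq_zero.mp ((hv_top (-1)).mp hc)) one_ne_zero
    obtain ⟨n, hn⟩ := WithTop.ne_top_iff_exists.mp hc
    rw [← hn] at h ⊢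
    have hn' : (0 : ℤ) = n + n := by exact_mod_cast h
    have : n = 0 := by omega
    simp [this]
  rw [show -z = (-1 : K) * z by ring, hv_mul, h1, zero_add]

lemma v_add_left (hv_top : ∀ z : K, v z = ⊤ ↔ z = 0)
    (hv_mul : ∀ z w : K, v (z * w) = v z + v w)
    (hv_add : ∀ z w : K, min (v z) (v w) ≤ v (z + w))
    {a b : K} (h : v a < v b) : v (a + b) = v a := by
  refine le_antisymm ?_ ?_
  · have h3 := hv_add (a + b) (-b)
    rw [add_neg_cancel_right, v_neg hv_top hv_mul] at h3
    rcases min_le_iff.mp h3 with h4 | h4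
    · exact h4
    · exact absurd (lt_of_lt_of_le h h4) (lt_irrefl _)
  · have := hv_add a b
    rwa [min_eq_left h.le] at this

lemma v_add_right (hv_top : ∀ z : K, v z = ⊤ ↔ z = 0)
    (hv_mul : ∀ z w : K, v (z * w) = v z + v w)
    (hv_add : ∀ z w : K, min (v z) (v w) ≤ v (z + w))
    {a b : K} (h : v b < v a) : v (a + b) = v b := by
  rw [add_comm]; exact v_add_left hv_top hv_mul hv_add h

lemma v_sub_left (hv_top : ∀ z : K, v z = ⊤ ↔ z = 0)
    (hv_mul : ∀ z w : K, v (z * w) = v z + v w)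
    (hv_add : ∀ z w : K, min (v z) (v w) ≤ v (z + w))
    {a b : K} (h : v a < v b) : v (a - b) = v a := by
  rw [sub_eq_add_neg]
  exact v_add_left hv_top hv_mul hv_add (by rwa [v_neg hv_top hv_mul])

lemma v_sub_right (hv_top : ∀ z : K, v z = ⊤ ↔ z = 0)
    (hv_mul : ∀ z w : K, v (z * w) = v z + v w)
    (hv_add : ∀ z w : K, min (v z) (v w) ≤ v (z + w))
    {a b : K} (h : v b < v a) : v (a - b) = v b := by
  rw [sub_eq_add_neg]
  rw [show v b = v (-b) from (v_neg hv_top hv_mul b).symm]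
  exact v_add_right hv_top hv_mul hv_add (by rwa [v_neg hv_top hv_mul])

end GCV7Aux

open GCV7Aux in
/-- (Kodaira type `I_m^*`, `m = 2k − 1` odd, residue characteristic `2`.)
Let `K` be a field with a normalised discrete valuation `v` with uniformiser `π`, suppose
`v(2) > 0`, and let `k ≥ 1`.  Let `E/K` be a Weierstrass curve with `v(a₁) ≥ 1`, `v(a₂) = 1`,
`v(a₃) = k + 1`, `v(a₄) ≥ k + 2` and `v(a₆) ≥ 2k + 2`.  Let `P = (x, y)` be a point on `E`
with `v(x) > 0` satisfying the Weierstrass equation.  Then: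
(a) if `v(x) = 1`, then `v(φ₂(P)) = v(ψ₃(P)) = 4` and `v(ψ₂²(P)) ≥ 4`;
(b) the range `1 < v(x) < k + 1` is impossible for a point with `v(y) > 0`;
(c) if `v(x) ≥ k + 1`, then `v(φ₂(P)) = v(ψ₃(P)) = 2k + 3` and `v(ψ₂²(P)) = 2k + 2`. -/
theorem greatest_common_valuation_stmt_7 {K : Type*} [Field K]
    (v : K → WithTop ℤ)
    (hv_top : ∀ z : K, v z = ⊤ ↔ z = 0)
    (hv_mul : ∀ z w : K, v (z * w) = v z + v w)
    (hv_add : ∀ z w : K, min (v z) (v w) ≤ v (z + w))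
    (π : K) (hπ : v π = 1)
    (hv2 : 0 < v (2 : K))
    (k : ℤ) (hk : 1 ≤ k)
    (W : WeierstrassCurve K)
    (ha₁ : 1 ≤ v W.a₁) (ha₂ : v W.a₂ = 1)
    (ha₃ : v W.a₃ = ((k + 1 : ℤ) : WithTop ℤ))
    (ha₄ : ((k + 2 : ℤ) : WithTop ℤ) ≤ v W.a₄)
    (ha₆ : ((2 * k + 2 : ℤ) : WithTop ℤ) ≤ v W.a₆)
    (x y : K) (hP : W.toAffine.Equation x y) (hx : 0 < v x) :
    (v x = 1 →
      v ((W.Φ 2).eval x) = ((4 : ℤ) : WithTop ℤ) ∧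
      v (W.Ψ₃.eval x) = ((4 : ℤ) : WithTop ℤ) ∧
      ((4 : ℤ) : WithTop ℤ) ≤ v (W.Ψ₂Sq.eval x)) ∧
    (0 < v y → ¬ (1 < v x ∧ v x < ((k + 1 : ℤ) : WithTop ℤ))) ∧
    (((k + 1 : ℤ) : WithTop ℤ) ≤ v x →
      v ((W.Φ 2).eval x) = ((2 * k + 3 : ℤ) : WithTop ℤ) ∧
      v (W.Ψ₃.eval x) = ((2 * k + 3 : ℤ) : WithTop ℤ) ∧
      v (W.Ψ₂Sq.eval x) = ((2 * k + 2 : ℤ) : WithTop ℤ)) := by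
  -- generic helpers
  have hL : ∀ {a b : K}, v a < v b → v (a + b) = v a :=
    fun h => v_add_left hv_top hv_mul hv_add h
  have hR : ∀ {a b : K}, v b < v a → v (a + b) = v b :=
    fun h => v_add_right hv_top hv_mul hv_add h
  have hSL : ∀ {a b : K}, v a < v b → v (a - b) = v a :=
    fun h => v_sub_left hv_top hv_mul hv_add h
  have hSR : ∀ {a b : K}, v b < v a → v (a - b) = v b :=
    fun h => v_sub_right hv_top hv_mul hv_add h
  have hadd : ∀ {m : WithTop ℤ} {z w : K}, m ≤ v z → m ≤ v w → m ≤ v (z + w) :=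
    fun h1 h2 => le_trans (le_min h1 h2) (hv_add _ _)
  have hsub : ∀ {m : WithTop ℤ} {z w : K}, m ≤ v z → m ≤ v w → m ≤ v (z - w) := by
    intro m z w h1 h2
    rw [sub_eq_add_neg]
    exact hadd h1 (by rwa [v_neg hv_top hv_mul])
  have hmono : ∀ (b : ℤ) {a : ℤ} {s : WithTop ℤ}, ((a : ℤ) : WithTop ℤ) ≤ s → b ≤ a →
      ((b : ℤ) : WithTop ℤ) ≤ s := by
    intro b a s h1 h2
    have h3 : ((b : ℤ) : WithTop ℤ) ≤ ((a : ℤ) : WithTop ℤ) := by exact_mod_cast h2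
    exact le_trans h3 h1
  have hlt : ∀ (a : ℤ) {b : ℤ} {s : WithTop ℤ}, ((b : ℤ) : WithTop ℤ) ≤ s → a < b →
      ((a : ℤ) : WithTop ℤ) < s := by
    intro a b s h1 h2
    have h3 : ((a : ℤ) : WithTop ℤ) < ((b : ℤ) : WithTop ℤ) := by exact_mod_cast h2
    exact lt_of_lt_of_le h3 h1
  have hmul2 : ∀ {a b : ℤ} {z w : K}, ((a : ℤ) : WithTop ℤ) ≤ v z →
      ((b : ℤ) : WithTop ℤ) ≤ v w → ((a + b : ℤ) : WithTop ℤ) ≤ v (z * w) := by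
    intro a b z w h1 h2
    rw [hv_mul]; push_cast; exact add_le_add h1 h2
  have hmul3 : ∀ {a b c : ℤ} {z w u : K}, ((a : ℤ) : WithTop ℤ) ≤ v z →
      ((b : ℤ) : WithTop ℤ) ≤ v w → ((c : ℤ) : WithTop ℤ) ≤ v u →
      ((a + b + c : ℤ) : WithTop ℤ) ≤ v (z * w * u) :=
    fun h1 h2 h3 => hmul2 (hmul2 h1 h2) h3
  have hmulE : ∀ {a b : ℤ} {z w : K}, v z = ((a : ℤ) : WithTop ℤ) →
      v w = ((b : ℤ) : WithTop ℤ) → v (z * w) = ((a + b : ℤ) : WithTop ℤ) := by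
    intro a b z w h1 h2
    rw [hv_mul, h1, h2]; push_cast; ring
  have hp2 : ∀ {a : ℤ} {z : K}, ((a : ℤ) : WithTop ℤ) ≤ v z →
      ((a + a : ℤ) : WithTop ℤ) ≤ v (z ^ 2) := by
    intro a z h; rw [show z ^ 2 = z * z by ring]; exact hmul2 h h
  have hp3 : ∀ {a : ℤ} {z : K}, ((a : ℤ) : WithTop ℤ) ≤ v z →
      ((a + a + a : ℤ) : WithTop ℤ) ≤ v (z ^ 3) := by
    intro a z h; rw [show z ^ 3 = z * z * z by ring]; exact hmul3 h h h
  have hp4 : ∀ {a : ℤ} {z : K}, ((a : ℤ) : WithTop ℤ) ≤ v z →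
      ((a + a + a + a : ℤ) : WithTop ℤ) ≤ v (z ^ 4) := by
    intro a z h; rw [show z ^ 4 = z * z * z * z by ring]
    exact hmul2 (hmul3 h h h) h
  have hp2E : ∀ {a : ℤ} {z : K}, v z = ((a : ℤ) : WithTop ℤ) →
      v (z ^ 2) = ((a + a : ℤ) : WithTop ℤ) := by
    intro a z h; rw [show z ^ 2 = z * z by ring]; exact hmulE h h
  have hp3E : ∀ {a : ℤ} {z : K}, v z = ((a : ℤ) : WithTop ℤ) →
      v (z ^ 3) = ((a + a + a : ℤ) : WithTop ℤ) := by
    intro a z h; rw [show z ^ 3 = z * z * z by ring]; exact hmulE (hmulE h h) h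
  have hp4E : ∀ {a : ℤ} {z : K}, v z = ((a : ℤ) : WithTop ℤ) →
      v (z ^ 4) = ((a + a + a + a : ℤ) : WithTop ℤ) := by
    intro a z h; rw [show z ^ 4 = z * z * z * z by ring]
    exact hmulE (hmulE (hmulE h h) h) h
  have hcoeq : ∀ {a b : ℤ}, a = b → ((a : ℤ) : WithTop ℤ) = ((b : ℤ) : WithTop ℤ) :=
    fun h => by rw [h]
  -- value of small constants
  have hone_le : ∀ {s : WithTop ℤ}, 0 < s → ((1 : ℤ) : WithTop ℤ) ≤ s := by
    intro s hs
    induction s using WithTop.recTopCoe with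
    | top => exact le_top
    | coe n =>
      have : (0 : ℤ) < n := by exact_mod_cast hs
      exact_mod_cast this
  have hsucc : ∀ {a : ℤ} {s : WithTop ℤ}, ((a : ℤ) : WithTop ℤ) < s →
      ((a + 1 : ℤ) : WithTop ℤ) ≤ s := by
    intro a s hs
    induction s using WithTop.recTopCoe with
    | top => exact le_top
    | coe n =>
      have : a < n := by exact_mod_cast hs
      exact_mod_cast this
  have h2 : ((1 : ℤ) : WithTop ℤ) ≤ v (2 : K) := hone_le hv2
  have ha1 : ((1 : ℤ) : WithTop ℤ) ≤ v W.a₁ := by exact_mod_cast ha₁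
  have ha2 : v W.a₂ = ((1 : ℤ) : WithTop ℤ) := by exact_mod_cast ha₂
  have hv4 : ((2 : ℤ) : WithTop ℤ) ≤ v (4 : K) := by
    rw [show (4 : K) = 2 * 2 by norm_num]
    exact hmono 2 (hmul2 h2 h2) (by omega)
  have hv3 : v (3 : K) = ((0 : ℤ) : WithTop ℤ) := by
    have h1 : v (1 : K) < v (2 : K) := by
      rw [v_one hv_top hv_mul]; exact hv2
    rw [show (3 : K) = 1 + 2 by norm_num, hL h1, v_one hv_top hv_mul]
    rfl
  -- b-invariants
  have hvb2 : ((2 : ℤ) : WithTop ℤ) ≤ v W.b₂ := by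
    rw [show W.b₂ = W.a₁ ^ 2 + 4 * W.a₂ from rfl]
    exact hadd (hmono 2 (hp2 ha1) (by omega)) (hmono 2 (hmul2 hv4 ha2.ge) (by omega))
  have hvb4 : ((k + 2 : ℤ) : WithTop ℤ) ≤ v W.b₄ := by
    rw [show W.b₄ = 2 * W.a₄ + W.a₁ * W.a₃ from rfl]
    exact hadd (hmono (k + 2) (hmul2 h2 ha₄) (by omega))
      (hmono (k + 2) (hmul2 ha1 ha₃.ge) (by omega))
  have hvb6 : v W.b₆ = ((2 * k + 2 : ℤ) : WithTop ℤ) := by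
    rw [show W.b₆ = W.a₃ ^ 2 + 4 * W.a₆ from rfl]
    have e1 : v (W.a₃ ^ 2) = ((2 * k + 2 : ℤ) : WithTop ℤ) := by
      rw [hp2E ha₃]; exact hcoeq (by ring)
    have e2 : ((2 * k + 3 : ℤ) : WithTop ℤ) ≤ v (4 * W.a₆) :=
      hmono (2 * k + 3) (hmul2 hv4 ha₆) (by omega)
    have e3 : v (W.a₃ ^ 2) < v (4 * W.a₆) := by
      rw [e1]; exact hlt (2 * k + 2) e2 (by omega)
    rw [hL e3]; exact e1
  have hvb8 : v W.b₈ = ((2 * k + 3 : ℤ) : WithTop ℤ) := by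
    rw [show W.b₈ = W.a₁ ^ 2 * W.a₆ + 4 * W.a₂ * W.a₆ - W.a₁ * W.a₃ * W.a₄ +
      W.a₂ * W.a₃ ^ 2 - W.a₄ ^ 2 from rfl]
    have hA : ((2 * k + 4 : ℤ) : WithTop ℤ) ≤
        v (W.a₁ ^ 2 * W.a₆ + 4 * W.a₂ * W.a₆ - W.a₁ * W.a₃ * W.a₄) := by
      refine hsub (hadd ?_ ?_) ?_
      · exact hmono (2 * k + 4) (hmul2 (hp2 ha1) ha₆) (by omega)
      · exact hmono (2 * k + 4) (hmul2 (hmul2 hv4 ha2.ge) ha₆) (by omega)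
      · exact hmono (2 * k + 4) (hmul3 ha1 ha₃.ge ha₄) (by omega)
    have e1 : v (W.a₂ * W.a₃ ^ 2) = ((2 * k + 3 : ℤ) : WithTop ℤ) := by
      rw [hmulE ha2 (hp2E ha₃)]; exact hcoeq (by ring)
    have e1lt : v (W.a₂ * W.a₃ ^ 2) <
        v (W.a₁ ^ 2 * W.a₆ + 4 * W.a₂ * W.a₆ - W.a₁ * W.a₃ * W.a₄) := by
      rw [e1]; exact hlt (2 * k + 3) hA (by omega)
    have e2 : v (W.a₁ ^ 2 * W.a₆ + 4 * W.a₂ * W.a₆ - W.a₁ * W.a₃ * W.a₄ +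
        W.a₂ * W.a₃ ^ 2) = ((2 * k + 3 : ℤ) : WithTop ℤ) := by
      rw [hR e1lt]; exact e1
    have e3 : v (W.a₁ ^ 2 * W.a₆ + 4 * W.a₂ * W.a₆ - W.a₁ * W.a₃ * W.a₄ +
        W.a₂ * W.a₃ ^ 2) < v (W.a₄ ^ 2) := by
      rw [e2]; exact hlt (2 * k + 3) (hmono (2 * k + 4) (hp2 ha₄) (by omega)) (by omega)
    rw [hSL e3]; exact e2
  -- eval expansions
  have ePhi : (W.Φ 2).eval x = x ^ 4 - W.b₄ * x ^ 2 - 2 * W.b₆ * x - W.b₈ := by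
    rw [WeierstrassCurve.Φ_two]; simp
  have ePsi3 : W.Ψ₃.eval x =
      3 * x ^ 4 + W.b₂ * x ^ 3 + 3 * W.b₄ * x ^ 2 + 3 * W.b₆ * x + W.b₈ := by
    rw [WeierstrassCurve.Ψ₃]; simp
  have ePsi2 : W.Ψ₂Sq.eval x = 4 * x ^ 3 + W.b₂ * x ^ 2 + 2 * W.b₄ * x + W.b₆ := by
    rw [WeierstrassCurve.Ψ₂Sq]; simp
  refine ⟨?_, ?_, ?_⟩
  · -- part (a) : v x = 1
    intro hx1
    have hx1' : v x = ((1 : ℤ) : WithTop ℤ) := by exact_mod_cast hx1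
    have ex4 : v (x ^ 4) = ((4 : ℤ) : WithTop ℤ) := by
      rw [hp4E hx1']; exact hcoeq (by ring)
    have t1 : ((5 : ℤ) : WithTop ℤ) ≤ v (W.b₄ * x ^ 2) :=
      hmono 5 (hmul2 hvb4 (hp2 hx1'.ge)) (by omega)
    have t2 : ((5 : ℤ) : WithTop ℤ) ≤ v (2 * W.b₆ * x) :=
      hmono 5 (hmul3 h2 hvb6.ge hx1'.ge) (by omega)
    have t3 : ((5 : ℤ) : WithTop ℤ) ≤ v W.b₈ := hmono 5 hvb8.ge (by omega)
    refine ⟨?_, ?_, ?_⟩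
    · rw [ePhi]
      have s1 : v (x ^ 4 - W.b₄ * x ^ 2) = ((4 : ℤ) : WithTop ℤ) := by
        rw [hSL (by rw [ex4]; exact hlt 4 t1 (by omega))]; exact ex4
      have s2 : v (x ^ 4 - W.b₄ * x ^ 2 - 2 * W.b₆ * x) = ((4 : ℤ) : WithTop ℤ) := by
        rw [hSL (by rw [s1]; exact hlt 4 t2 (by omega))]; exact s1
      rw [hSL (by rw [s2]; exact hlt 4 t3 (by omega))]; exact s2
    · rw [ePsi3]
      have e0 : v (3 * x ^ 4) = ((4 : ℤ) : WithTop ℤ) := by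
        rw [hmulE hv3 ex4]; exact hcoeq (by ring)
      have u1 : ((5 : ℤ) : WithTop ℤ) ≤ v (W.b₂ * x ^ 3) :=
        hmono 5 (hmul2 hvb2 (hp3 hx1'.ge)) (by omega)
      have u2 : ((5 : ℤ) : WithTop ℤ) ≤ v (3 * W.b₄ * x ^ 2) :=
        hmono 5 (hmul3 hv3.ge hvb4 (hp2 hx1'.ge)) (by omega)
      have u3 : ((5 : ℤ) : WithTop ℤ) ≤ v (3 * W.b₆ * x) :=
        hmono 5 (hmul3 hv3.ge hvb6.ge hx1'.ge) (by omega)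
      have s1 : v (3 * x ^ 4 + W.b₂ * x ^ 3) = ((4 : ℤ) : WithTop ℤ) := by
        rw [hL (by rw [e0]; exact hlt 4 u1 (by omega))]; exact e0
      have s2 : v (3 * x ^ 4 + W.b₂ * x ^ 3 + 3 * W.b₄ * x ^ 2) = ((4 : ℤ) : WithTop ℤ) := by
        rw [hL (by rw [s1]; exact hlt 4 u2 (by omega))]; exact s1
      have s3 : v (3 * x ^ 4 + W.b₂ * x ^ 3 + 3 * W.b₄ * x ^ 2 + 3 * W.b₆ * x)
          = ((4 : ℤ) : WithTop ℤ) := by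
        rw [hL (by rw [s2]; exact hlt 4 u3 (by omega))]; exact s2
      rw [hL (by rw [s3]; exact hlt 4 t3 (by omega))]; exact s3
    · rw [ePsi2]
      refine hadd (hadd (hadd ?_ ?_) ?_) ?_
      · exact hmono 4 (hmul2 hv4 (hp3 hx1'.ge)) (by omega)
      · exact hmono 4 (hmul2 hvb2 (hp2 hx1'.ge)) (by omega)
      · exact hmono 4 (hmul3 h2 hvb4 hx1'.ge) (by omega)
      · exact hmono 4 hvb6.ge (by omega)
  · -- part (b)
    rintro hy ⟨hx1, hxk⟩
    obtain ⟨n, hn⟩ := WithTop.ne_top_iff_exists.mp (ne_top_of_lt hxk)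
    have hn' : v x = ((n : ℤ) : WithTop ℤ) := hn.symm
    have hn1 : 1 < n := by
      rw [← hn] at hx1; exact_mod_cast hx1
    have hnk : n < k + 1 := by
      rw [← hn] at hxk; exact_mod_cast hxk
    rw [WeierstrassCurve.Affine.equation_iff] at hP
    -- valuation of RHS is 2n+1
    have ex3 : ((3 * n : ℤ) : WithTop ℤ) ≤ v (x ^ 3) :=
      hmono (3 * n) (hp3 hn'.ge) (by omega)
    have e2x : v (W.a₂ * x ^ 2) = ((2 * n + 1 : ℤ) : WithTop ℤ) := by
      rw [hmulE ha2 (hp2E hn')]; exact hcoeq (by ring)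
    have s1 : v (x ^ 3 + W.a₂ * x ^ 2) = ((2 * n + 1 : ℤ) : WithTop ℤ) := by
      rw [hR (by rw [e2x]; exact hlt (2 * n + 1) ex3 (by omega))]; exact e2x
    have t4 : ((2 * n + 2 : ℤ) : WithTop ℤ) ≤ v (W.a₄ * x) :=
      hmono (2 * n + 2) (hmul2 ha₄ hn'.ge) (by omega)
    have s2 : v (x ^ 3 + W.a₂ * x ^ 2 + W.a₄ * x) = ((2 * n + 1 : ℤ) : WithTop ℤ) := by
      rw [hL (by rw [s1]; exact hlt (2 * n + 1) t4 (by omega))]; exact s1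
    have t6 : ((2 * n + 2 : ℤ) : WithTop ℤ) ≤ v W.a₆ := hmono (2 * n + 2) ha₆ (by omega)
    have sR : v (x ^ 3 + W.a₂ * x ^ 2 + W.a₄ * x + W.a₆) = ((2 * n + 1 : ℤ) : WithTop ℤ) := by
      rw [hL (by rw [s2]; exact hlt (2 * n + 1) t6 (by omega))]; exact s2
    have hLR : v (y ^ 2 + W.a₁ * x * y + W.a₃ * y) = ((2 * n + 1 : ℤ) : WithTop ℤ) := by
      rw [hP]; exact sR
    rcases le_or_gt (v y) ((n : ℤ) : WithTop ℤ) with hyn | hyn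
    · -- v y = m with 1 ≤ m ≤ n : LHS has even valuation 2m
      obtain ⟨m, hm⟩ := WithTop.ne_top_iff_exists.mp
        (ne_top_of_le_ne_top (WithTop.coe_ne_top) hyn)
      have hm' : v y = ((m : ℤ) : WithTop ℤ) := hm.symm
      have hm1 : 1 ≤ m := by
        have : (0 : WithTop ℤ) < ((m : ℤ) : WithTop ℤ) := by rw [← hm']; exact hy
        exact_mod_cast this
      have hmn : m ≤ n := by rw [← hm] at hyn; exact_mod_cast hyn
      have ey2 : v (y ^ 2) = ((2 * m : ℤ) : WithTop ℤ) := by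
        rw [hp2E hm']; exact hcoeq (by ring)
      have t1 : ((n + m + 1 : ℤ) : WithTop ℤ) ≤ v (W.a₁ * x * y) :=
        hmono (n + m + 1) (hmul3 ha1 hn'.ge hm'.ge) (by omega)
      have s1 : v (y ^ 2 + W.a₁ * x * y) = ((2 * m : ℤ) : WithTop ℤ) := by
        rw [hL (by rw [ey2]; exact hlt (2 * m) t1 (by omega))]; exact ey2
      have t2 : ((2 * m + 1 : ℤ) : WithTop ℤ) ≤ v (W.a₃ * y) :=
        hmono (2 * m + 1) (hmul2 ha₃.ge hm'.ge) (by omega)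
      have sL : v (y ^ 2 + W.a₁ * x * y + W.a₃ * y) = ((2 * m : ℤ) : WithTop ℤ) := by
        rw [hL (by rw [s1]; exact hlt (2 * m) t2 (by omega))]; exact s1
      rw [sL] at hLR
      have : 2 * m = 2 * n + 1 := by exact_mod_cast hLR
      omega
    · -- v y ≥ n+1 : LHS has valuation ≥ 2n+2
      have hy1 : ((n + 1 : ℤ) : WithTop ℤ) ≤ v y := hsucc hyn
      have big : ((2 * n + 2 : ℤ) : WithTop ℤ) ≤ v (y ^ 2 + W.a₁ * x * y + W.a₃ * y) := by
        refine hadd (hadd ?_ ?_) ?_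
        · exact hmono (2 * n + 2) (hp2 hy1) (by omega)
        · exact hmono (2 * n + 2) (hmul3 ha1 hn'.ge hy1) (by omega)
        · exact hmono (2 * n + 2) (hmul2 ha₃.ge hy1) (by omega)
      rw [hLR] at big
      have : (2 * n + 2 : ℤ) ≤ 2 * n + 1 := by exact_mod_cast big
      omega
  · -- part (c) : v x ≥ k+1
    intro hxk
    have ex4 : ((4 * k + 4 : ℤ) : WithTop ℤ) ≤ v (x ^ 4) :=
      hmono (4 * k + 4) (hp4 hxk) (by omega)
    refine ⟨?_, ?_, ?_⟩
    · rw [ePhi]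
      have t1 : ((3 * k + 4 : ℤ) : WithTop ℤ) ≤ v (W.b₄ * x ^ 2) :=
        hmono (3 * k + 4) (hmul2 hvb4 (hp2 hxk)) (by omega)
      have t2 : ((3 * k + 4 : ℤ) : WithTop ℤ) ≤ v (2 * W.b₆ * x) :=
        hmono (3 * k + 4) (hmul3 h2 hvb6.ge hxk) (by omega)
      have s1 : ((2 * k + 4 : ℤ) : WithTop ℤ) ≤ v (x ^ 4 - W.b₄ * x ^ 2 - 2 * W.b₆ * x) :=
        hsub (hsub (hmono (2 * k + 4) ex4 (by omega)) (hmono (2 * k + 4) t1 (by omega)))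
          (hmono (2 * k + 4) t2 (by omega))
      have e3 : v W.b₈ < v (x ^ 4 - W.b₄ * x ^ 2 - 2 * W.b₆ * x) := by
        rw [hvb8]; exact hlt (2 * k + 3) s1 (by omega)
      rw [hSR e3]; exact hvb8
    · rw [ePsi3]
      have s1 : ((2 * k + 4 : ℤ) : WithTop ℤ) ≤
          v (3 * x ^ 4 + W.b₂ * x ^ 3 + 3 * W.b₄ * x ^ 2 + 3 * W.b₆ * x) := by
        refine hadd (hadd (hadd ?_ ?_) ?_) ?_
        · exact hmono (2 * k + 4) (hmul2 hv3.ge ex4) (by omega)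
        · exact hmono (2 * k + 4) (hmul2 hvb2 (hp3 hxk)) (by omega)
        · exact hmono (2 * k + 4) (hmul3 hv3.ge hvb4 (hp2 hxk)) (by omega)
        · exact hmono (2 * k + 4) (hmul3 hv3.ge hvb6.ge hxk) (by omega)
      have e3 : v W.b₈ < v (3 * x ^ 4 + W.b₂ * x ^ 3 + 3 * W.b₄ * x ^ 2 + 3 * W.b₆ * x) := by
        rw [hvb8]; exact hlt (2 * k + 3) s1 (by omega)
      rw [hR e3]; exact hvb8
    · rw [ePsi2]
      have s1 : ((2 * k + 3 : ℤ) : WithTop ℤ) ≤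
          v (4 * x ^ 3 + W.b₂ * x ^ 2 + 2 * W.b₄ * x) := by
        refine hadd (hadd ?_ ?_) ?_
        · exact hmono (2 * k + 3) (hmul2 hv4 (hp3 hxk)) (by omega)
        · exact hmono (2 * k + 3) (hmul2 hvb2 (hp2 hxk)) (by omega)
        · exact hmono (2 * k + 3) (hmul3 h2 hvb4 hxk) (by omega)
      have e3 : v W.b₆ < v (4 * x ^ 3 + W.b₂ * x ^ 2 + 2 * W.b₄ * x) := by
        rw [hvb6]; exact hlt (2 * k + 2) s1 (by omega)
      rw [hR e3]; exact hvb6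
end

section
/- Suppose v(2) > 0 and let k ≥ 1 be an integer (corresponding to Kodaira type I_m^* with m = 2k even and residue characteristic 2). Assume v(a₁) ≥ 1, v(a₂) = 1, v(a₃) ≥ k + 2, v(a₄) = k + 2 and v(a₆) ≥ 2k + 3. Let P = (x, y) be a point on E with v(x) > 0 satisfying the Weierstrass equation. Then: (a) if v(x) = 1, then v(φ₂(P)) = v(ψ₃(P)) = 4 and v(ψ₂²(P)) ≥ 4; (b) the range 1 < v(x) < k + 1 is impossible for a point with v(y) > 0; (c) if v(x) ≥ k + 1, then v(φ₂(P)) = v(ψ₃(P)) = 2k + 4 (= m + 4) and v(ψ₂²(P)) ≥ 2k + 4. -/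
open Polynomial

private lemma vv_one {K : Type*} [Field K] (v : K → WithTop ℤ)
    (hv_top : ∀ z : K, v z = ⊤ ↔ z = 0)
    (hv_mul : ∀ z w : K, v (z * w) = v z + v w) : v 1 = 0 := by
  have h := hv_mul 1 1
  rw [one_mul] at h
  have h1 : v (1 : K) ≠ ⊤ := by simp [hv_top]
  obtain ⟨n, hn⟩ := WithTop.ne_top_iff_exists.mp h1
  rw [← hn] at h ⊢
  have : n = n + n := by exact_mod_cast h
  have : n = 0 := by omega
  simp [this]

private lemma vv_neg {K : Type*} [Field K] (v : K → WithTop ℤ)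
    (hv_top : ∀ z : K, v z = ⊤ ↔ z = 0)
    (hv_mul : ∀ z w : K, v (z * w) = v z + v w) : ∀ z : K, v (-z) = v z := by
  have hm1 : v (-1 : K) = 0 := by
    have h := hv_mul (-1) (-1)
    rw [neg_mul_neg, one_mul, vv_one v hv_top hv_mul] at h
    have h1 : v (-1 : K) ≠ ⊤ := by simp [hv_top]
    obtain ⟨n, hn⟩ := WithTop.ne_top_iff_exists.mp h1
    rw [← hn] at h ⊢
    have : n + n = 0 := by exact_mod_cast h.symm
    have : n = 0 := by omega
    simp [this]
  intro z
  rw [show -z = -1 * z by ring, hv_mul, hm1, zero_add]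

private lemma vv_dom {K : Type*} [Field K] (v : K → WithTop ℤ)
    (hv_top : ∀ z : K, v z = ⊤ ↔ z = 0)
    (hv_mul : ∀ z w : K, v (z * w) = v z + v w)
    (hv_add : ∀ z w : K, min (v z) (v w) ≤ v (z + w))
    {z w : K} (h : v w < v z) : v (z + w) = v w := by
  have hvneg := vv_neg v hv_top hv_mul
  refine le_antisymm ?_ ?_
  · by_contra hcon
    push_neg at hcon
    have h1 : min (v (z + w)) (v (-z)) ≤ v w := by
      have := hv_add (z + w) (-z)
      rwa [show z + w + -z = w by ring] at this
    rw [hvneg] at h1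
    exact absurd h1 (not_le.mpr (lt_min hcon h))
  · have := hv_add z w
    rwa [min_eq_right h.le] at this

/-- (Kodaira type `I_m^*`, `m = 2k` even, residue characteristic `2`.)
Let `K` be a field with a normalised discrete valuation `v` with uniformiser `π`, suppose
`v(2) > 0`, and let `k ≥ 1`.  Let `E/K` be a Weierstrass curve with `v(a₁) ≥ 1`, `v(a₂) = 1`,
`v(a₃) ≥ k + 2`, `v(a₄) = k + 2` and `v(a₆) ≥ 2k + 3`.  Let `P = (x, y)` be a point on `E`
with `v(x) > 0` satisfying the Weierstrass equation.  Then: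
(a) if `v(x) = 1`, then `v(φ₂(P)) = v(ψ₃(P)) = 4` and `v(ψ₂²(P)) ≥ 4`;
(b) the range `1 < v(x) < k + 1` is impossible for a point with `v(y) > 0`;
(c) if `v(x) ≥ k + 1`, then `v(φ₂(P)) = v(ψ₃(P)) = 2k + 4` and `v(ψ₂²(P)) ≥ 2k + 4`. -/
theorem greatest_common_valuation_stmt_9 {K : Type*} [Field K]
    (v : K → WithTop ℤ)
    (hv_top : ∀ z : K, v z = ⊤ ↔ z = 0)
    (hv_mul : ∀ z w : K, v (z * w) = v z + v w)
    (hv_add : ∀ z w : K, min (v z) (v w) ≤ v (z + w))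
    (π : K) (hπ : v π = 1)
    (hv2 : 0 < v (2 : K))
    (k : ℤ) (hk : 1 ≤ k)
    (W : WeierstrassCurve K)
    (ha₁ : 1 ≤ v W.a₁) (ha₂ : v W.a₂ = 1)
    (ha₃ : ((k + 2 : ℤ) : WithTop ℤ) ≤ v W.a₃)
    (ha₄ : v W.a₄ = ((k + 2 : ℤ) : WithTop ℤ))
    (ha₆ : ((2 * k + 3 : ℤ) : WithTop ℤ) ≤ v W.a₆)
    (x y : K) (hP : W.toAffine.Equation x y) (hx : 0 < v x) :
    (v x = 1 →
      v ((W.Φ 2).eval x) = ((4 : ℤ) : WithTop ℤ) ∧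
      v (W.Ψ₃.eval x) = ((4 : ℤ) : WithTop ℤ) ∧
      ((4 : ℤ) : WithTop ℤ) ≤ v (W.Ψ₂Sq.eval x)) ∧
    (0 < v y → ¬ (1 < v x ∧ v x < ((k + 1 : ℤ) : WithTop ℤ))) ∧
    (((k + 1 : ℤ) : WithTop ℤ) ≤ v x →
      v ((W.Φ 2).eval x) = ((2 * k + 4 : ℤ) : WithTop ℤ) ∧
      v (W.Ψ₃.eval x) = ((2 * k + 4 : ℤ) : WithTop ℤ) ∧
      ((2 * k + 4 : ℤ) : WithTop ℤ) ≤ v (W.Ψ₂Sq.eval x)) := by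
  have v1 := vv_one v hv_top hv_mul
  have vneg := vv_neg v hv_top hv_mul
  have hA : ∀ (c : ℤ) (z w : K), ((c : ℤ) : WithTop ℤ) ≤ v z →
      ((c : ℤ) : WithTop ℤ) ≤ v w → ((c : ℤ) : WithTop ℤ) ≤ v (z + w) :=
    fun c z w hz hw => le_trans (le_min hz hw) (hv_add z w)
  have hS : ∀ (c : ℤ) (z w : K), ((c : ℤ) : WithTop ℤ) ≤ v z →
      ((c : ℤ) : WithTop ℤ) ≤ v w → ((c : ℤ) : WithTop ℤ) ≤ v (z - w) := by
    intro c z w hz hw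
    rw [sub_eq_add_neg]
    exact hA c z (-w) hz (by rwa [vneg])
  have hM : ∀ (a b c : ℤ) (z w : K), a + b = c → ((a : ℤ) : WithTop ℤ) ≤ v z →
      ((b : ℤ) : WithTop ℤ) ≤ v w → ((c : ℤ) : WithTop ℤ) ≤ v (z * w) := by
    intro a b c z w habc hz hw
    rw [hv_mul, ← habc, WithTop.coe_add]
    exact add_le_add hz hw
  have hME : ∀ (a b c : ℤ) (z w : K), a + b = c → v z = ((a : ℤ) : WithTop ℤ) →
      v w = ((b : ℤ) : WithTop ℤ) → v (z * w) = ((c : ℤ) : WithTop ℤ) := by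
    intro a b c z w habc hz hw
    rw [hv_mul, hz, hw, ← habc]
    exact (WithTop.coe_add a b).symm
  have hMono : ∀ (c d : ℤ) (z : K), c ≤ d → ((d : ℤ) : WithTop ℤ) ≤ v z →
      ((c : ℤ) : WithTop ℤ) ≤ v z :=
    fun c d z h hz => le_trans (WithTop.coe_le_coe.mpr h) hz
  have hDom : ∀ (c : ℤ) (z w : K), v w = ((c : ℤ) : WithTop ℤ) →
      ((c + 1 : ℤ) : WithTop ℤ) ≤ v z → v (z + w) = ((c : ℤ) : WithTop ℤ) := by
    intro c z w hw hz
    rw [← hw]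
    refine vv_dom v hv_top hv_mul hv_add ?_
    rw [hw]
    refine lt_of_lt_of_le ?_ hz
    exact_mod_cast (by omega : c < c + 1)
  have ha₁' : ((1 : ℤ) : WithTop ℤ) ≤ v W.a₁ := by exact_mod_cast ha₁
  have ha₂' : v W.a₂ = ((1 : ℤ) : WithTop ℤ) := by exact_mod_cast ha₂
  have hv2' : ((1 : ℤ) : WithTop ℤ) ≤ v (2 : K) := by
    rcases h2 : v (2 : K) with _ | n
    · exact le_top
    · rw [h2] at hv2
      have h0 : (0 : ℤ) < n := WithTop.coe_lt_coe.mp hv2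
      exact WithTop.coe_le_coe.mpr (by omega)
  have v3' : v (3 : K) = ((0 : ℤ) : WithTop ℤ) := by
    have h30 : (0 : WithTop ℤ) ≤ v (3 : K) := by
      have h := hv_add 1 2
      rw [show (1 : K) + 2 = 3 by norm_num, v1] at h
      exact le_trans (le_min le_rfl hv2.le) h
    have h31 : v (3 : K) ≤ 0 := by
      by_contra hcon
      push_neg at hcon
      have h := hv_add 3 (-2)
      rw [show (3 : K) + -2 = 1 by norm_num, v1, vneg] at h
      exact absurd h (not_le.mpr (lt_min hcon hv2))
    exact_mod_cast le_antisymm h31 h30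
  have hv4 : ((2 : ℤ) : WithTop ℤ) ≤ v (4 : K) := by
    rw [show (4 : K) = 2 * 2 by norm_num]
    exact hM 1 1 2 _ _ (by norm_num) hv2' hv2'
  have ha₁sq : ((2 : ℤ) : WithTop ℤ) ≤ v (W.a₁ ^ 2) := by
    rw [sq]; exact hM 1 1 2 _ _ (by norm_num) ha₁' ha₁'
  have ha₃sq : ((2 * k + 4 : ℤ) : WithTop ℤ) ≤ v (W.a₃ ^ 2) := by
    rw [sq]; exact hM (k + 2) (k + 2) _ _ _ (by ring) ha₃ ha₃
  have ha₄sq : v (W.a₄ ^ 2) = ((2 * k + 4 : ℤ) : WithTop ℤ) := by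
    rw [sq]; exact hME (k + 2) (k + 2) _ _ _ (by ring) ha₄ ha₄
  have hb₂ : ((2 : ℤ) : WithTop ℤ) ≤ v W.b₂ := by
    rw [WeierstrassCurve.b₂]
    exact hA 2 _ _ ha₁sq (hMono 2 3 _ (by omega) (hM 2 1 3 _ _ (by norm_num) hv4 ha₂'.ge))
  have hb₄ : ((k + 3 : ℤ) : WithTop ℤ) ≤ v W.b₄ := by
    rw [WeierstrassCurve.b₄]
    exact hA _ _ _ (hM 1 (k + 2) (k + 3) _ _ (by ring) hv2' ha₄.ge)
      (hM 1 (k + 2) (k + 3) _ _ (by ring) ha₁' ha₃)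
  have hb₆ : ((2 * k + 4 : ℤ) : WithTop ℤ) ≤ v W.b₆ := by
    rw [WeierstrassCurve.b₆]
    exact hA _ _ _ ha₃sq
      (hMono (2 * k + 4) (2 * k + 5) _ (by omega) (hM 2 (2 * k + 3) _ _ _ (by ring) hv4 ha₆))
  have hb₈ : v W.b₈ = ((2 * k + 4 : ℤ) : WithTop ℤ) := by
    rw [WeierstrassCurve.b₈, show W.a₁ ^ 2 * W.a₆ + 4 * W.a₂ * W.a₆ - W.a₁ * W.a₃ * W.a₄ +
        W.a₂ * W.a₃ ^ 2 - W.a₄ ^ 2 =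
        (W.a₁ ^ 2 * W.a₆ + 4 * W.a₂ * W.a₆ - W.a₁ * W.a₃ * W.a₄ + W.a₂ * W.a₃ ^ 2) +
          -(W.a₄ ^ 2) by ring]
    refine hDom (2 * k + 4) _ _ (by rw [vneg]; exact ha₄sq) ?_
    refine hA _ _ _ (hS _ _ _ (hA _ _ _ ?_ ?_) ?_) ?_
    · exact hMono _ (2 * k + 5) _ (by omega) (hM 2 (2 * k + 3) _ _ _ (by ring) ha₁sq ha₆)
    · exact hMono _ (2 * k + 6) _ (by omega)
        (hM 3 (2 * k + 3) _ _ _ (by ring) (hM 2 1 3 _ _ (by norm_num) hv4 ha₂'.ge) ha₆)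
    · exact hMono _ (2 * k + 5) _ (by omega)
        (hM (k + 3) (k + 2) _ _ _ (by ring) (hM 1 (k + 2) _ _ _ (by ring) ha₁' ha₃) ha₄.ge)
    · exact hMono _ (2 * k + 5) _ (by omega)
        (hM 1 (2 * k + 4) _ _ _ (by ring) ha₂'.ge ha₃sq)
  have hΦev : (W.Φ 2).eval x = x ^ 4 - W.b₄ * x ^ 2 - 2 * W.b₆ * x - W.b₈ := by
    rw [WeierstrassCurve.Φ_two]
    simp only [eval_sub, eval_mul, eval_pow, eval_C, eval_X]
  have hΨ₃ev : W.Ψ₃.eval x =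
      3 * x ^ 4 + W.b₂ * x ^ 3 + 3 * W.b₄ * x ^ 2 + 3 * W.b₆ * x + W.b₈ := by
    simp only [WeierstrassCurve.Ψ₃, eval_add, eval_mul, eval_pow, eval_C, eval_X, eval_ofNat]
  have hΨ₂ev : W.Ψ₂Sq.eval x = 4 * x ^ 3 + W.b₂ * x ^ 2 + 2 * W.b₄ * x + W.b₆ := by
    simp only [WeierstrassCurve.Ψ₂Sq, eval_add, eval_mul, eval_pow, eval_C, eval_X]
  refine ⟨?_, ?_, ?_⟩
  · -- part (a)
    intro hx1
    have hx1' : v x = ((1 : ℤ) : WithTop ℤ) := by exact_mod_cast hx1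
    have hx2 : v (x ^ 2) = ((2 : ℤ) : WithTop ℤ) := by
      rw [sq]; exact hME 1 1 2 _ _ (by norm_num) hx1' hx1'
    have hx3 : v (x ^ 3) = ((3 : ℤ) : WithTop ℤ) := by
      rw [pow_succ]; exact hME 2 1 3 _ _ (by norm_num) hx2 hx1'
    have hx4 : v (x ^ 4) = ((4 : ℤ) : WithTop ℤ) := by
      rw [pow_succ]; exact hME 3 1 4 _ _ (by norm_num) hx3 hx1'
    refine ⟨?_, ?_, ?_⟩
    · rw [hΦev, show x ^ 4 - W.b₄ * x ^ 2 - 2 * W.b₆ * x - W.b₈ =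
        -(W.b₄ * x ^ 2 + 2 * W.b₆ * x + W.b₈) + x ^ 4 by ring]
      refine hDom 4 _ _ hx4 ?_
      rw [vneg]
      refine hA _ _ _ (hA _ _ _ ?_ ?_) ?_
      · exact hMono _ (k + 5) _ (by omega) (hM (k + 3) 2 _ _ _ (by ring) hb₄ hx2.ge)
      · exact hMono _ (2 * k + 6) _ (by omega)
          (hM (2 * k + 5) 1 _ _ _ (by ring) (hM 1 (2 * k + 4) _ _ _ (by ring) hv2' hb₆) hx1'.ge)
      · exact hMono _ (2 * k + 4) _ (by omega) hb₈.ge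
    · rw [hΨ₃ev, show 3 * x ^ 4 + W.b₂ * x ^ 3 + 3 * W.b₄ * x ^ 2 + 3 * W.b₆ * x + W.b₈ =
        (W.b₂ * x ^ 3 + 3 * W.b₄ * x ^ 2 + 3 * W.b₆ * x + W.b₈) + 3 * x ^ 4 by ring]
      refine hDom 4 _ _ (hME 0 4 4 _ _ (by norm_num) v3' hx4) ?_
      refine hA _ _ _ (hA _ _ _ (hA _ _ _ ?_ ?_) ?_) ?_
      · exact hM 2 3 _ _ _ (by norm_num) hb₂ hx3.ge
      · exact hMono _ (k + 5) _ (by omega)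
          (hM (k + 3) 2 _ _ _ (by ring) (hM 0 (k + 3) _ _ _ (by ring) v3'.ge hb₄) hx2.ge)
      · exact hMono _ (2 * k + 5) _ (by omega)
          (hM (2 * k + 4) 1 _ _ _ (by ring) (hM 0 (2 * k + 4) _ _ _ (by ring) v3'.ge hb₆) hx1'.ge)
      · exact hMono _ (2 * k + 4) _ (by omega) hb₈.ge
    · rw [hΨ₂ev]
      refine hA _ _ _ (hA _ _ _ (hA _ _ _ ?_ ?_) ?_) ?_
      · exact hMono 4 5 _ (by omega) (hM 2 3 5 _ _ (by norm_num) hv4 hx3.ge)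
      · exact hM 2 2 4 _ _ (by norm_num) hb₂ hx2.ge
      · exact hMono _ (k + 5) _ (by omega)
          (hM (k + 4) 1 _ _ _ (by ring) (hM 1 (k + 3) _ _ _ (by ring) hv2' hb₄) hx1'.ge)
      · exact hMono _ (2 * k + 4) _ (by omega) hb₆
  · -- part (b)
    rintro hy ⟨h1, h2⟩
    obtain ⟨n, hn⟩ := WithTop.ne_top_iff_exists.mp (ne_top_of_lt h2)
    have hn' : v x = ((n : ℤ) : WithTop ℤ) := hn.symm
    have h1n : 1 < n := by rw [← hn] at h1; exact_mod_cast h1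
    have h2n : n < k + 1 := by rw [← hn] at h2; exact_mod_cast h2
    have hxn2 : v (x ^ 2) = ((2 * n : ℤ) : WithTop ℤ) := by
      rw [sq]; exact hME n n _ _ _ (by ring) hn' hn'
    have hxn3 : v (x ^ 3) = ((3 * n : ℤ) : WithTop ℤ) := by
      rw [pow_succ]; exact hME (2 * n) n _ _ _ (by ring) hxn2 hn'
    have hRHS : v (x ^ 3 + W.a₂ * x ^ 2 + W.a₄ * x + W.a₆) = ((2 * n + 1 : ℤ) : WithTop ℤ) := by
      rw [show x ^ 3 + W.a₂ * x ^ 2 + W.a₄ * x + W.a₆ =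
        (x ^ 3 + W.a₄ * x + W.a₆) + W.a₂ * x ^ 2 by ring]
      refine hDom (2 * n + 1) _ _ (hME 1 (2 * n) _ _ _ (by ring) ha₂' hxn2) ?_
      refine hA _ _ _ (hA _ _ _ ?_ ?_) ?_
      · exact hMono _ (3 * n) _ (by omega) hxn3.ge
      · exact hMono _ (k + 2 + n) _ (by omega) (hM (k + 2) n _ _ _ rfl ha₄.ge hn'.ge)
      · exact hMono _ (2 * k + 3) _ (by omega) ha₆
    rw [WeierstrassCurve.Affine.equation_iff] at hP
    have hL : v (y ^ 2 + W.a₁ * x * y + W.a₃ * y) = ((2 * n + 1 : ℤ) : WithTop ℤ) := by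
      rw [hP]; exact hRHS
    by_cases hyt : y = 0
    · rw [hyt, show (0 : K) ^ 2 + W.a₁ * x * 0 + W.a₃ * 0 = 0 by ring,
        (hv_top 0).mpr rfl] at hL
      exact absurd hL.symm (WithTop.coe_ne_top)
    · obtain ⟨m, hm⟩ := WithTop.ne_top_iff_exists.mp (fun h => hyt ((hv_top y).mp h))
      have hm' : v y = ((m : ℤ) : WithTop ℤ) := hm.symm
      have hm0 : 0 < m := by rw [← hm] at hy; exact_mod_cast hy
      rcases le_or_gt m n with hmn | hnm
      · have hL2 : v (y ^ 2 + W.a₁ * x * y + W.a₃ * y) = ((2 * m : ℤ) : WithTop ℤ) := by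
          rw [show y ^ 2 + W.a₁ * x * y + W.a₃ * y =
            (W.a₁ * x * y + W.a₃ * y) + y ^ 2 by ring]
          refine hDom (2 * m) _ _ (by rw [sq]; exact hME m m _ _ _ (by ring) hm' hm') ?_
          refine hA _ _ _ ?_ ?_
          · exact hMono _ (1 + n + m) _ (by omega)
              (hM (1 + n) m _ _ _ rfl (hM 1 n _ _ _ rfl ha₁' hn'.ge) hm'.ge)
          · exact hMono _ (k + 2 + m) _ (by omega) (hM (k + 2) m _ _ _ rfl ha₃ hm'.ge)
        rw [hL2] at hL
        have : (2 * m : ℤ) = 2 * n + 1 := by exact_mod_cast hL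
        omega
      · have hL3 : ((2 * n + 2 : ℤ) : WithTop ℤ) ≤ v (y ^ 2 + W.a₁ * x * y + W.a₃ * y) := by
          refine hA _ _ _ (hA _ _ _ ?_ ?_) ?_
          · refine hMono _ (2 * m) _ (by omega) ?_
            rw [sq]; exact (hME m m _ _ _ (by ring) hm' hm').ge
          · exact hMono _ (1 + n + m) _ (by omega)
              (hM (1 + n) m _ _ _ rfl (hM 1 n _ _ _ rfl ha₁' hn'.ge) hm'.ge)
          · exact hMono _ (k + 2 + m) _ (by omega) (hM (k + 2) m _ _ _ rfl ha₃ hm'.ge)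
        rw [hL] at hL3
        have : (2 * n + 2 : ℤ) ≤ 2 * n + 1 := by exact_mod_cast hL3
        omega
  · -- part (c)
    intro hxk
    have hx2 : ((2 * k + 2 : ℤ) : WithTop ℤ) ≤ v (x ^ 2) := by
      rw [sq]; exact hM (k + 1) (k + 1) _ _ _ (by ring) hxk hxk
    have hx3 : ((3 * k + 3 : ℤ) : WithTop ℤ) ≤ v (x ^ 3) := by
      rw [pow_succ]; exact hM (2 * k + 2) (k + 1) _ _ _ (by ring) hx2 hxk
    have hx4 : ((4 * k + 4 : ℤ) : WithTop ℤ) ≤ v (x ^ 4) := by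
      rw [pow_succ]; exact hM (3 * k + 3) (k + 1) _ _ _ (by ring) hx3 hxk
    refine ⟨?_, ?_, ?_⟩
    · rw [hΦev, show x ^ 4 - W.b₄ * x ^ 2 - 2 * W.b₆ * x - W.b₈ =
        (x ^ 4 - W.b₄ * x ^ 2 - 2 * W.b₆ * x) + -W.b₈ by ring]
      refine hDom (2 * k + 4) _ _ (by rw [vneg]; exact hb₈) ?_
      refine hS _ _ _ (hS _ _ _ ?_ ?_) ?_
      · exact hMono _ (4 * k + 4) _ (by omega) hx4
      · exact hMono _ (3 * k + 5) _ (by omega) (hM (k + 3) (2 * k + 2) _ _ _ (by ring) hb₄ hx2)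
      · exact hMono _ (3 * k + 6) _ (by omega)
          (hM (2 * k + 5) (k + 1) _ _ _ (by ring)
            (hM 1 (2 * k + 4) _ _ _ (by ring) hv2' hb₆) hxk)
    · rw [hΨ₃ev, show 3 * x ^ 4 + W.b₂ * x ^ 3 + 3 * W.b₄ * x ^ 2 + 3 * W.b₆ * x + W.b₈ =
        (3 * x ^ 4 + W.b₂ * x ^ 3 + 3 * W.b₄ * x ^ 2 + 3 * W.b₆ * x) + W.b₈ by ring]
      refine hDom (2 * k + 4) _ _ hb₈ ?_
      refine hA _ _ _ (hA _ _ _ (hA _ _ _ ?_ ?_) ?_) ?_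
      · exact hMono _ (4 * k + 4) _ (by omega)
          (hM 0 (4 * k + 4) _ _ _ (by ring) v3'.ge hx4)
      · exact hMono _ (3 * k + 5) _ (by omega) (hM 2 (3 * k + 3) _ _ _ (by ring) hb₂ hx3)
      · exact hMono _ (3 * k + 5) _ (by omega)
          (hM (k + 3) (2 * k + 2) _ _ _ (by ring) (hM 0 (k + 3) _ _ _ (by ring) v3'.ge hb₄) hx2)
      · exact hMono _ (3 * k + 5) _ (by omega)
          (hM (2 * k + 4) (k + 1) _ _ _ (by ring)
            (hM 0 (2 * k + 4) _ _ _ (by ring) v3'.ge hb₆) hxk)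
    · rw [hΨ₂ev]
      refine hA _ _ _ (hA _ _ _ (hA _ _ _ ?_ ?_) ?_) ?_
      · exact hMono _ (3 * k + 5) _ (by omega) (hM 2 (3 * k + 3) _ _ _ (by ring) hv4 hx3)
      · exact hM 2 (2 * k + 2) (2 * k + 4) _ _ (by ring) hb₂ hx2
      · exact hMono _ (2 * k + 5) _ (by omega)
          (hM (k + 4) (k + 1) _ _ _ (by ring) (hM 1 (k + 3) _ _ _ (by ring) hv2' hb₄) hxk)
      · exact hMono _ (2 * k + 4) _ (by omega) hb₆
end

section
/- Suppose (as in Step 5 of Tate's algorithm for Kodaira type IV) that v(a₁) ≥ 1, v(a₂) ≥ 1, v(a₃) ≥ 1, v(a₄) ≥ 2, v(a₆) ≥ 2 and v(b₆) = 2. Let P = (x, y) be a point on E with v(x) > 0 and v(y) > 0, and assume v(φ₃(P)) ≤ v(ψ₃²(P)) (i.e. m_P = 3). Then v(ψ₂²(P)) = 2, v(ψ₄(P)) = 5·v(ψ₂(P)), and v(φ₃(P)) = 3·v(ψ₂²(P)) = 6. -/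
open Polynomial

section Helpers

variable {K : Type*} [Field K] (v : K → WithTop ℤ)
    (hv_top : ∀ z : K, v z = ⊤ ↔ z = 0)
    (hv_mul : ∀ z w : K, v (z * w) = v z + v w)
    (hv_add : ∀ z w : K, min (v z) (v w) ≤ v (z + w))

include hv_top hv_mul in
lemma my_v_one : v 1 = 0 := by
  have h := hv_mul 1 1
  rw [one_mul] at h
  have hne : v 1 ≠ ⊤ := by simp [hv_top]
  obtain ⟨a, ha⟩ := WithTop.ne_top_iff_exists.mp hne
  rw [← ha] at h ⊢
  have ha0 : a = a + a := by exact_mod_cast h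
  norm_cast
  omega

include hv_top hv_mul in
lemma my_v_neg (z : K) : v (-z) = v z := by
  have h1 : v (-1 : K) = 0 := by
    have h := hv_mul (-1) (-1)
    rw [neg_one_mul, neg_neg, my_v_one v hv_top hv_mul] at h
    have hne : v (-1 : K) ≠ ⊤ := by simp [hv_top]
    obtain ⟨a, ha⟩ := WithTop.ne_top_iff_exists.mp hne
    rw [← ha] at h ⊢
    have ha0 : (0:ℤ) = a + a := by exact_mod_cast h
    norm_cast
    omega
  calc v (-z) = v ((-1) * z) := by ring_nf
    _ = v z := by rw [hv_mul, h1, zero_add]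

include hv_add in
lemma my_le_v_add {c : WithTop ℤ} {a b : K} (ha : c ≤ v a) (hb : c ≤ v b) : c ≤ v (a + b) :=
  le_trans (le_min ha hb) (hv_add a b)

include hv_mul in
lemma my_v_mul_le {a b : K} {c d e : WithTop ℤ} (ha : c ≤ v a) (hb : d ≤ v b)
    (hcd : e ≤ c + d) : e ≤ v (a * b) := by
  rw [hv_mul]; exact hcd.trans (add_le_add ha hb)

include hv_top hv_mul hv_add in
lemma my_v_nat (n : ℕ) : 0 ≤ v (n : K) := by
  induction n with
  | zero => simp [(hv_top 0).mpr rfl]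
  | succ n ih =>
    push_cast
    exact my_le_v_add v hv_add ih (le_of_eq (my_v_one v hv_top hv_mul).symm)

include hv_top hv_mul hv_add in
lemma my_v_add_eq_left {a b : K} (h : v a < v b) : v (a + b) = v a := by
  refine le_antisymm ?_ (le_trans (le_min le_rfl h.le) (hv_add a b))
  have h2 := hv_add (a + b) (-b)
  rw [add_neg_cancel_right, my_v_neg v hv_top hv_mul] at h2
  rcases le_total (v (a + b)) (v b) with hc | hc
  · rwa [min_eq_left hc] at h2
  · rw [min_eq_right hc] at h2; exact absurd (lt_of_lt_of_le h h2) (lt_irrefl _)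

include hv_top hv_mul hv_add in
lemma my_v_add_eq_right {a b : K} (h : v b < v a) : v (a + b) = v b := by
  rw [add_comm]; exact my_v_add_eq_left v hv_top hv_mul hv_add h

end Helpers

lemma my_wt_one_le {a : WithTop ℤ} (h : 0 < a) : 1 ≤ a := by
  induction a using WithTop.recTopCoe with
  | top => exact le_top
  | coe n =>
    have hn : (0:ℤ) < n := by exact_mod_cast h
    exact_mod_cast hn

lemma my_wt_half {a : WithTop ℤ} (h : a + a = ((2:ℤ) : WithTop ℤ)) :
    a = ((1:ℤ) : WithTop ℤ) := by
  induction a using WithTop.recTopCoe with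
  | top => simp at h
  | coe n =>
    have hn : n + n = 2 := by exact_mod_cast h
    norm_cast
    omega

/-- (Step 5 of Tate's algorithm, Kodaira type `IV`.)  Let `K` be a field with a normalised
discrete valuation `v` with uniformiser `π`, and let `E/K` be a Weierstrass curve with
`v(a₁) ≥ 1`, `v(a₂) ≥ 1`, `v(a₃) ≥ 1`, `v(a₄) ≥ 2`, `v(a₆) ≥ 2` and `v(b₆) = 2`.  Let
`P = (x, y)` be a point on `E` with `v(x) > 0` and `v(y) > 0`, and assume
`v(φ₃(P)) ≤ v(ψ₃²(P))` (i.e. `m_P = 3`).  Then `v(ψ₂²(P)) = 2`,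
`v(ψ₄(P)) = 5·v(ψ₂(P))`, and `v(φ₃(P)) = 3·v(ψ₂²(P)) = 6`. -/
theorem greatest_common_valuation_stmt_12 {K : Type*} [Field K]
    (v : K → WithTop ℤ)
    (hv_top : ∀ z : K, v z = ⊤ ↔ z = 0)
    (hv_mul : ∀ z w : K, v (z * w) = v z + v w)
    (hv_add : ∀ z w : K, min (v z) (v w) ≤ v (z + w))
    (π : K) (hπ : v π = 1)
    (W : WeierstrassCurve K)
    (ha₁ : 1 ≤ v W.a₁) (ha₂ : 1 ≤ v W.a₂) (ha₃ : 1 ≤ v W.a₃)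
    (ha₄ : ((2 : ℤ) : WithTop ℤ) ≤ v W.a₄) (ha₆ : ((2 : ℤ) : WithTop ℤ) ≤ v W.a₆)
    (hb₆ : v W.b₆ = ((2 : ℤ) : WithTop ℤ))
    (x y : K) (hP : W.toAffine.Equation x y) (hx : 0 < v x) (hy : 0 < v y)
    (hle : v ((W.φ 3).evalEval x y) ≤ v ((W.ψ 3).evalEval x y ^ 2)) :
    v (W.Ψ₂Sq.eval x) = ((2 : ℤ) : WithTop ℤ) ∧
    v ((W.ψ 4).evalEval x y) = 5 • v ((W.ψ 2).evalEval x y) ∧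
    v ((W.φ 3).evalEval x y) = 3 • v (W.Ψ₂Sq.eval x) ∧
    v ((W.φ 3).evalEval x y) = ((6 : ℤ) : WithTop ℤ) := by
  -- shorthand for helpers
  have Vadd := fun {c : WithTop ℤ} {a b : K} (h1 : c ≤ v a) (h2 : c ≤ v b) =>
    my_le_v_add v hv_add h1 h2
  have Vmul := fun {a b : K} {c d e : WithTop ℤ} (h1 : c ≤ v a) (h2 : d ≤ v b)
    (hcd : e ≤ c + d) => my_v_mul_le v hv_mul h1 h2 hcd
  have Vneg := my_v_neg v hv_top hv_mul
  have VaddR := fun {a b : K} (h : v b < v a) => my_v_add_eq_right v hv_top hv_mul hv_add h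
  -- numerals
  have hK2 : ((0:ℤ) : WithTop ℤ) ≤ v (2:K) := by simpa using my_v_nat v hv_top hv_mul hv_add 2
  have hK3 : ((0:ℤ) : WithTop ℤ) ≤ v (3:K) := by simpa using my_v_nat v hv_top hv_mul hv_add 3
  have hK4 : ((0:ℤ) : WithTop ℤ) ≤ v (4:K) := by simpa using my_v_nat v hv_top hv_mul hv_add 4
  have hK5 : ((0:ℤ) : WithTop ℤ) ≤ v (5:K) := by simpa using my_v_nat v hv_top hv_mul hv_add 5
  have hK10 : ((0:ℤ) : WithTop ℤ) ≤ v (10:K) := by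
    simpa using my_v_nat v hv_top hv_mul hv_add 10
  have hx1 : ((1:ℤ) : WithTop ℤ) ≤ v x := by exact_mod_cast my_wt_one_le hx
  have hy1 : ((1:ℤ) : WithTop ℤ) ≤ v y := by exact_mod_cast my_wt_one_le hy
  have ha₁' : ((1:ℤ) : WithTop ℤ) ≤ v W.a₁ := by exact_mod_cast ha₁
  have ha₂' : ((1:ℤ) : WithTop ℤ) ≤ v W.a₂ := by exact_mod_cast ha₂
  have ha₃' : ((1:ℤ) : WithTop ℤ) ≤ v W.a₃ := by exact_mod_cast ha₃
  -- powers of x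
  have hx2 : ((2:ℤ) : WithTop ℤ) ≤ v (x^2) := by
    rw [pow_two]; exact Vmul hx1 hx1 (by norm_cast)
  have hx3 : ((3:ℤ) : WithTop ℤ) ≤ v (x^3) := by
    rw [pow_succ]; exact Vmul hx2 hx1 (by norm_cast)
  have hx4 : ((4:ℤ) : WithTop ℤ) ≤ v (x^4) := by
    rw [pow_succ]; exact Vmul hx3 hx1 (by norm_cast)
  have hx5 : ((5:ℤ) : WithTop ℤ) ≤ v (x^5) := by
    rw [pow_succ]; exact Vmul hx4 hx1 (by norm_cast)
  have hx6 : ((6:ℤ) : WithTop ℤ) ≤ v (x^6) := by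
    rw [pow_succ]; exact Vmul hx5 hx1 (by norm_cast)
  -- b-invariants
  have hb2 : ((1:ℤ) : WithTop ℤ) ≤ v W.b₂ := by
    rw [WeierstrassCurve.b₂, pow_two]
    exact Vadd (Vmul ha₁' ha₁' (by norm_cast)) (Vmul hK4 ha₂' (by norm_cast))
  have hb4 : ((2:ℤ) : WithTop ℤ) ≤ v W.b₄ := by
    rw [WeierstrassCurve.b₄]
    exact Vadd (Vmul hK2 ha₄ (by norm_cast)) (Vmul ha₁' ha₃' (by norm_cast))
  have hb8 : ((3:ℤ) : WithTop ℤ) ≤ v W.b₈ := by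
    rw [WeierstrassCurve.b₈, sub_eq_add_neg, sub_eq_add_neg]
    refine Vadd (Vadd (Vadd (Vadd ?_ ?_) ?_) ?_) ?_
    · rw [pow_two]
      exact Vmul (Vmul ha₁' ha₁' (le_refl _)) ha₆ (by norm_cast)
    · exact Vmul (Vmul hK4 ha₂' (le_refl _)) ha₆ (by norm_cast)
    · rw [Vneg]
      exact Vmul (Vmul ha₁' ha₃' (le_refl _)) ha₄ (by norm_cast)
    · rw [pow_two]
      exact Vmul ha₂' (Vmul ha₃' ha₃' (le_refl _)) (by norm_cast)
    · rw [Vneg, pow_two]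
      exact Vmul ha₄ ha₄ (by norm_cast)
  -- explicit evaluations
  have e2 : (W.ψ 2).evalEval x y = 2*y + W.a₁*x + W.a₃ := by
    rw [WeierstrassCurve.ψ_two]; exact W.toAffine.evalEval_polynomialY x y
  have e3 : (W.ψ 3).evalEval x y
      = 3*x^4 + W.b₂*x^3 + 3*W.b₄*x^2 + 3*W.b₆*x + W.b₈ := by
    rw [WeierstrassCurve.ψ_three]; simp [WeierstrassCurve.Ψ₃, evalEval]
  have e4 : (W.ψ 4).evalEval x y = (2*x^6 + W.b₂*x^5 + 5*W.b₄*x^4 + 10*W.b₆*x^3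
      + 10*W.b₈*x^2 + (W.b₂*W.b₈ - W.b₄*W.b₆)*x + (W.b₄*W.b₈ - W.b₆^2))
      * ((W.ψ 2).evalEval x y) := by
    rw [WeierstrassCurve.ψ_four, WeierstrassCurve.ψ_two]
    simp [WeierstrassCurve.preΨ₄, evalEval, WeierstrassCurve.ψ₂]
  have eφ : (W.φ 3).evalEval x y = x * ((W.ψ 3).evalEval x y)^2
      - (2*x^6 + W.b₂*x^5 + 5*W.b₄*x^4 + 10*W.b₆*x^3 + 10*W.b₈*x^2
      + (W.b₂*W.b₈ - W.b₄*W.b₆)*x + (W.b₄*W.b₈ - W.b₆^2))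
      * ((W.ψ 2).evalEval x y)^2 := by
    rw [WeierstrassCurve.φ_three, WeierstrassCurve.ψ_three]
    simp [WeierstrassCurve.preΨ₄, evalEval, WeierstrassCurve.ψ₂]
  have eS : W.Ψ₂Sq.eval x = 4*x^3 + W.b₂*x^2 + 2*W.b₄*x + W.b₆ := by
    simp [WeierstrassCurve.Ψ₂Sq]
  have hsq : ((W.ψ 2).evalEval x y)^2 = W.Ψ₂Sq.eval x := by
    have h := congrArg (Polynomial.evalEval x y) W.ψ₂_sq
    rw [WeierstrassCurve.Affine.Equation] at hP
    simpa [WeierstrassCurve.ψ_two, hP, map_add, map_mul, map_pow, evalEval_C] using h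
  -- valuation of Ψ₂Sq
  have hS : v (W.Ψ₂Sq.eval x) = ((2:ℤ) : WithTop ℤ) := by
    rw [eS]
    have hrest : ((3:ℤ) : WithTop ℤ) ≤ v (4*x^3 + W.b₂*x^2 + 2*W.b₄*x) :=
      Vadd (Vadd (Vmul hK4 hx3 (by norm_cast)) (Vmul hb2 hx2 (by norm_cast)))
        (Vmul (Vmul hK2 hb4 (le_refl _)) hx1 (by norm_cast))
    rw [VaddR (by rw [hb₆]; exact lt_of_lt_of_le (by norm_cast) hrest)]
    exact hb₆
  -- valuation of ψ₂
  have hS2 : v ((W.ψ 2).evalEval x y) = ((1:ℤ) : WithTop ℤ) := by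
    apply my_wt_half
    rw [← hv_mul, ← pow_two, hsq, hS]
  -- valuation of preΨ₄ evaluated
  have hpre : v (2*x^6 + W.b₂*x^5 + 5*W.b₄*x^4 + 10*W.b₆*x^3 + 10*W.b₈*x^2
      + (W.b₂*W.b₈ - W.b₄*W.b₆)*x + (W.b₄*W.b₈ - W.b₆^2)) = ((4:ℤ) : WithTop ℤ) := by
    have hconst : v (W.b₄*W.b₈ - W.b₆^2) = ((4:ℤ) : WithTop ℤ) := by
      rw [sub_eq_add_neg]
      have hbb : ((5:ℤ) : WithTop ℤ) ≤ v (W.b₄*W.b₈) := Vmul hb4 hb8 (by norm_cast)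
      have hsqv : v (-(W.b₆^2)) = ((4:ℤ) : WithTop ℤ) := by
        rw [Vneg, pow_two, hv_mul, hb₆]; norm_cast
      rw [VaddR (by rw [hsqv]; exact lt_of_lt_of_le (by norm_cast) hbb)]
      exact hsqv
    have hb6' : ((2:ℤ) : WithTop ℤ) ≤ v W.b₆ := le_of_eq hb₆.symm
    have hrest : ((5:ℤ) : WithTop ℤ) ≤ v (2*x^6 + W.b₂*x^5 + 5*W.b₄*x^4 + 10*W.b₆*x^3
        + 10*W.b₈*x^2 + (W.b₂*W.b₈ - W.b₄*W.b₆)*x) := by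
      have hmid : ((4:ℤ) : WithTop ℤ) ≤ v (W.b₂*W.b₈ - W.b₄*W.b₆) := by
        rw [sub_eq_add_neg]
        refine Vadd (Vmul hb2 hb8 (by norm_cast)) ?_
        rw [Vneg]; exact Vmul hb4 hb6' (by norm_cast)
      refine Vadd (Vadd (Vadd (Vadd (Vadd ?_ ?_) ?_) ?_) ?_) ?_
      · exact Vmul hK2 hx6 (by norm_cast)
      · exact Vmul hb2 hx5 (by norm_cast)
      · exact Vmul (Vmul hK5 hb4 (le_refl _)) hx4 (by norm_cast)
      · exact Vmul (Vmul hK10 hb6' (le_refl _)) hx3 (by norm_cast)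
      · exact Vmul (Vmul hK10 hb8 (le_refl _)) hx2 (by norm_cast)
      · exact Vmul hmid hx1 (by norm_cast)
    rw [VaddR (by rw [hconst]; exact lt_of_lt_of_le (by norm_cast) hrest)]
    exact hconst
  -- valuation of ψ₃
  have hs3 : ((3:ℤ) : WithTop ℤ) ≤ v ((W.ψ 3).evalEval x y) := by
    rw [e3]
    have hb6' : ((2:ℤ) : WithTop ℤ) ≤ v W.b₆ := le_of_eq hb₆.symm
    refine Vadd (Vadd (Vadd (Vadd ?_ ?_) ?_) ?_) ?_
    · exact Vmul hK3 hx4 (by norm_cast)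
    · exact Vmul hb2 hx3 (by norm_cast)
    · exact Vmul (Vmul hK3 hb4 (le_refl _)) hx2 (by norm_cast)
    · exact Vmul (Vmul hK3 hb6' (le_refl _)) hx1 (by norm_cast)
    · exact hb8
  -- valuation of ψ₄
  have hψ4 : v ((W.ψ 4).evalEval x y) = ((5:ℤ) : WithTop ℤ) := by
    rw [e4, hv_mul, hpre, hS2]; norm_cast
  -- valuation of φ₃
  have hφ : v ((W.φ 3).evalEval x y) = ((6:ℤ) : WithTop ℤ) := by
    rw [eφ, sub_eq_add_neg]
    have hsecond : v (-((2*x^6 + W.b₂*x^5 + 5*W.b₄*x^4 + 10*W.b₆*x^3 + 10*W.b₈*x^2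
        + (W.b₂*W.b₈ - W.b₄*W.b₆)*x + (W.b₄*W.b₈ - W.b₆^2))
        * ((W.ψ 2).evalEval x y)^2)) = ((6:ℤ) : WithTop ℤ) := by
      rw [Vneg, hv_mul, hpre, pow_two, hv_mul, hS2]; norm_cast
    have hfirst : ((7:ℤ) : WithTop ℤ) ≤ v (x * ((W.ψ 3).evalEval x y)^2) := by
      have hsq3 : ((6:ℤ) : WithTop ℤ) ≤ v (((W.ψ 3).evalEval x y)^2) := by
        rw [pow_two]; exact Vmul hs3 hs3 (by norm_cast)
      exact Vmul hx1 hsq3 (by norm_cast)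
    rw [VaddR (by rw [hsecond]; exact lt_of_lt_of_le (by norm_cast) hfirst)]
    exact hsecond
  refine ⟨hS, ?_, ?_, hφ⟩
  · rw [hψ4, hS2, ← WithTop.coe_nsmul]
    norm_cast
  · rw [hφ, hS, ← WithTop.coe_nsmul]
    norm_cast
end
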